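/- arXiv:1206.0489 — 3 statements merged into one kernel-verified Lean document; each statement's English description precedes it below -/
import Mathlib

section
/- Suppose X, Y are independent real-valued continuous random variables, let Z = X - Y, and let (X1,Y1) and (X2,Y2) be two conditionally independent versions of (X,Y) given Z (i.e., each pair has the same joint distribution as (X,Y), each satisfies Xi - Yi = Z, and the two pairs are conditionally independent given Z). If all relevant differential entropies exist and are finite, then h(Z,Y1,Y2) + h(Z) - h(Y1) - h(Y2) = h(X1) + h(X2), where h(Z,Y1,Y2) is the joint differential entropy of the triple. -/
open MeasureTheory ProbabilityTheory

/-- The differential entropy of a random variable `X` (with respect to a reference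
measure `μ` on the value space, typically Lebesgue measure): if `f` is the density of
the law of `X` with respect to `μ`, then `h(X) = -E[log f(X)]`. -/
noncomputable def dent {Ω E : Type*} [MeasurableSpace Ω] [MeasurableSpace E]
    (μ : Measure E) (P : Measure Ω) (X : Ω → E) : ℝ :=
  -∫ x, Real.log (((P.map X).rnDeriv μ x).toReal) ∂(P.map X)

/-- `X` is a continuous random variable (its law is absolutely continuous with respect
to the reference measure `μ`, i.e. it has a density `f`), and its differential entropy
exists and is finite (the log-density is integrable under the law of `X`). -/
def FiniteDent {Ω E : Type*} [MeasurableSpace Ω] [MeasurableSpace E]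
    (μ : Measure E) (P : Measure Ω) (X : Ω → E) : Prop :=
  P.map X ≪ μ ∧
    Integrable (fun x => Real.log (((P.map X).rnDeriv μ x).toReal)) (P.map X)


namespace CondIndepEnt
open Real Set
open scoped ENNReal

noncomputable def eT : (ℝ × ℝ) ≃ᵐ (ℝ × ℝ) where
  toEquiv := ⟨fun p => (p.1 - p.2, p.2), fun p => (p.1 + p.2, p.2),
    fun p => by simp, fun p => by simp⟩
  measurable_toFun := (measurable_fst.sub measurable_snd).prodMk measurable_snd
  measurable_invFun := (measurable_fst.add measurable_snd).prodMk measurable_snd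

lemma eT_apply (p : ℝ × ℝ) : eT p = (p.1 - p.2, p.2) := rfl

lemma eT_map_volume : (volume : Measure (ℝ × ℝ)).map eT = volume := by
  have h := (measurePreserving_sub_prod (volume : Measure ℝ) volume).map_eq
  rw [Measure.volume_eq_prod ℝ ℝ]
  exact h


/-- Density of a product of absolutely continuous measures. -/
lemma rnDeriv_prod_ae {μ ν : Measure ℝ} [IsFiniteMeasure μ] [IsFiniteMeasure ν]
    (hμ : μ ≪ volume) (hν : ν ≪ volume) :
    (μ.prod ν).rnDeriv (volume : Measure (ℝ × ℝ))
      =ᵐ[(volume : Measure (ℝ × ℝ))]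
      fun p => μ.rnDeriv volume p.1 * ν.rnDeriv volume p.2 := by
  have hprod : μ.prod ν = (volume : Measure (ℝ × ℝ)).withDensity
      (fun p => μ.rnDeriv volume p.1 * ν.rnDeriv volume p.2) := by
    rw [Measure.volume_eq_prod ℝ ℝ]
    refine Measure.prod_eq fun s t hs ht => ?_
    rw [withDensity_apply _ (hs.prod ht), ← Measure.prod_restrict,
      lintegral_prod_mul (Measure.measurable_rnDeriv μ volume).aemeasurable
        (Measure.measurable_rnDeriv ν volume).aemeasurable,
      Measure.setLIntegral_rnDeriv hμ, Measure.setLIntegral_rnDeriv hν]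
  rw [hprod]
  exact Measure.rnDeriv_withDensity _
    (((Measure.measurable_rnDeriv μ volume).comp measurable_fst).mul
      ((Measure.measurable_rnDeriv ν volume).comp measurable_snd))


lemma setLIntegral_rect {κ : Measure (ℝ × ℝ)} [SigmaFinite κ]
    (hκ : κ ≪ (volume : Measure (ℝ × ℝ))) {S B : Set ℝ}
    (hS : MeasurableSet S) (hB : MeasurableSet B) :
    ∫⁻ z in S, ∫⁻ y in B, κ.rnDeriv volume (z, y) ∂volume ∂volume = κ (S ×ˢ B) := by
  have hmeas := Measure.measurable_rnDeriv κ (volume : Measure (ℝ × ℝ))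
  rw [← Measure.setLIntegral_rnDeriv hκ (S ×ˢ B), Measure.volume_eq_prod ℝ ℝ,
    ← Measure.prod_restrict]
  exact (lintegral_prod _ hmeas.aemeasurable).symm


lemma marginal_ae {ρ : Measure (ℝ × ℝ)} [IsFiniteMeasure ρ] {ζ : Measure ℝ} [SigmaFinite ζ]
    (hρac : ρ ≪ (volume : Measure (ℝ × ℝ))) (hζac : ζ ≪ (volume : Measure ℝ))
    (hfst : ρ.map Prod.fst = ζ) :
    (fun z => ∫⁻ y, ρ.rnDeriv volume (z, y) ∂volume) =ᵐ[(volume : Measure ℝ)]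
      ζ.rnDeriv volume := by
  have hmeas := Measure.measurable_rnDeriv ρ (volume : Measure (ℝ × ℝ))
  refine ae_eq_of_forall_setLIntegral_eq_of_sigmaFinite ?_ (Measure.measurable_rnDeriv ζ volume)
    (fun S hS _ => ?_)
  · exact Measurable.lintegral_prod_right hmeas
  · have h1 : ∫⁻ z in S, ∫⁻ y, ρ.rnDeriv volume (z, y) ∂volume ∂volume = ρ (S ×ˢ univ) := by
      rw [← setLIntegral_rect hρac hS MeasurableSet.univ]
      simp [Measure.restrict_univ]
    rw [h1, Measure.setLIntegral_rnDeriv hζac, prod_univ, ← hfst,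
      Measure.map_apply measurable_fst hS]


section CE

variable {Ω : Type*} [mΩ : MeasurableSpace Ω] {P : Measure Ω} [IsProbabilityMeasure P]
  {Z W : Ω → ℝ} {ρ : Measure (ℝ × ℝ)} {ζ : Measure ℝ}

/-- Basic a.e. facts about the conditional density ratio. -/
lemma ratio_facts [IsFiniteMeasure ρ] [SigmaFinite ζ]
    (hρac : ρ ≪ (volume : Measure (ℝ × ℝ))) (hζac : ζ ≪ volume)
    (hfst : ρ.map Prod.fst = ζ) {B : Set ℝ} (hB : MeasurableSet B) :
    ∀ᵐ z ∂(volume : Measure ℝ),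
      (∫⁻ y in B, ρ.rnDeriv volume (z, y) ∂volume) / ζ.rnDeriv volume z ≤ 1 ∧
      ζ.rnDeriv volume z * ((∫⁻ y in B, ρ.rnDeriv volume (z, y) ∂volume) / ζ.rnDeriv volume z)
        = ∫⁻ y in B, ρ.rnDeriv volume (z, y) ∂volume := by
  filter_upwards [marginal_ae hρac hζac hfst, Measure.rnDeriv_lt_top ζ volume] with z h1 h2
  have hle : (∫⁻ y in B, ρ.rnDeriv volume (z, y) ∂volume) ≤ ζ.rnDeriv volume z := by
    rw [← h1]; exact setLIntegral_le_lintegral _ _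
  constructor
  · exact le_trans (ENNReal.div_le_div_right hle _) ENNReal.div_self_le_one
  · by_cases hz : ζ.rnDeriv volume z = 0
    · have hm0 : (∫⁻ y in B, ρ.rnDeriv volume (z, y) ∂volume) = 0 :=
        le_antisymm (hz ▸ hle) zero_le
      simp [hz, hm0]
    · exact ENNReal.mul_div_cancel hz h2.ne

/-- The conditional density ratio is a version of the conditional expectation of an
indicator. -/
lemma condexp_indicator_ae (hZ : Measurable Z) (hW : Measurable W)
    (hρ : P.map (fun ω => (Z ω, W ω)) = ρ) (hρac : ρ ≪ (volume : Measure (ℝ × ℝ)))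
    (hζ : P.map Z = ζ) (hζac : ζ ≪ volume) {B : Set ℝ} (hB : MeasurableSet B) :
    (fun ω => ((∫⁻ y in B, ρ.rnDeriv volume (Z ω, y) ∂volume)
        / ζ.rnDeriv volume (Z ω)).toReal)
      =ᵐ[P] P[(W ⁻¹' B).indicator (fun _ => (1:ℝ)) | MeasurableSpace.comap Z inferInstance] := by
  have hρP : IsProbabilityMeasure ρ := hρ ▸ Measure.isProbabilityMeasure_map (hZ.prodMk hW).aemeasurable
  have hζP : IsProbabilityMeasure ζ := hζ ▸ Measure.isProbabilityMeasure_map hZ.aemeasurable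
  have hfst : ρ.map Prod.fst = ζ := by
    rw [← hρ, ← hζ, Measure.map_map measurable_fst (hZ.prodMk hW)]; rfl
  have hm : MeasurableSpace.comap Z inferInstance ≤ mΩ := hZ.comap_le
  have hZm : Measurable[MeasurableSpace.comap Z inferInstance] Z := fun t ht => ⟨t, ht, rfl⟩
  set fρ := ρ.rnDeriv (volume : Measure (ℝ × ℝ)) with hfρ
  set fZ := ζ.rnDeriv (volume : Measure ℝ) with hfZdef
  set m : ℝ → ℝ≥0∞ := fun z => ∫⁻ y in B, fρ (z, y) ∂volume with hmdef
  set q : ℝ → ℝ≥0∞ := fun z => m z / fZ z with hqdef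
  have hmmeas : Measurable m :=
    Measurable.lintegral_prod_right (Measure.measurable_rnDeriv ρ _)
  have hqmeas : Measurable q := hmmeas.div (Measure.measurable_rnDeriv ζ volume)
  have hgmeas : Measurable (fun z => (q z).toReal) := hqmeas.ennreal_toReal
  have hfacts := ratio_facts hρac hζac hfst hB
  have hq_le_one : ∀ᵐ z ∂volume, q z ≤ 1 := hfacts.mono fun z h => h.1
  have hq_mul : ∀ᵐ z ∂volume, fZ z * q z = m z := hfacts.mono fun z h => h.2
  -- transfer the bound along Z
  have hq_le_one_P : ∀ᵐ ω ∂P, q (Z ω) ≤ 1 := by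
    have h1 : ∀ᵐ z ∂(P.map Z), q z ≤ 1 := hζ ▸ hζac.ae_le hq_le_one
    exact (ae_map_iff hZ.aemeasurable (measurableSet_le hqmeas measurable_const)).mp h1
  have hInt : Integrable (fun ω => (q (Z ω)).toReal) P := by
    refine Integrable.mono' (integrable_const (1:ℝ))
      ((hgmeas.comp hZ).aestronglyMeasurable) ?_
    filter_upwards [hq_le_one_P] with ω hω
    rw [Real.norm_eq_abs, abs_of_nonneg ENNReal.toReal_nonneg]
    exact le_trans (ENNReal.toReal_mono ENNReal.one_ne_top hω) (by simp)
  refine ae_eq_condExp_of_forall_setIntegral_eq hm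
    ((integrable_const (1:ℝ)).indicator (hW hB)) (fun s _ _ => hInt.integrableOn)
    (fun s hs _ => ?_) ((hgmeas.comp hZm).stronglyMeasurable.aestronglyMeasurable)
  rcases hs with ⟨S, hS, rfl⟩
  have hLHS : ∫ ω in Z ⁻¹' S, (q (Z ω)).toReal ∂P = (ρ (S ×ˢ B)).toReal := by
    have h1 : ∫ z in S, (q z).toReal ∂ζ = ∫ ω in Z ⁻¹' S, (q (Z ω)).toReal ∂P := by
      rw [← hζ]
      exact setIntegral_map hS hgmeas.aestronglyMeasurable hZ.aemeasurable
    rw [← h1]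
    have h2 : ∫ z in S, (q z).toReal ∂ζ = (∫⁻ z in S, q z ∂ζ).toReal := by
      refine integral_toReal hqmeas.aemeasurable ?_
      refine ae_restrict_of_ae ?_
      filter_upwards [hζac.ae_le hq_le_one] with z hz using lt_of_le_of_lt hz ENNReal.one_lt_top
    have h3 : ∫⁻ z in S, q z ∂ζ = ρ (S ×ˢ B) := by
      conv_lhs => rw [← Measure.withDensity_rnDeriv_eq ζ volume hζac]
      rw [restrict_withDensity hS,
        lintegral_withDensity_eq_lintegral_mul _ (Measure.measurable_rnDeriv ζ volume) hqmeas]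
      have h4 : ∫⁻ z in S, (fZ * q) z ∂volume = ∫⁻ z in S, m z ∂volume := by
        refine lintegral_congr_ae (ae_restrict_of_ae ?_)
        filter_upwards [hq_mul] with z hz
        simpa [Pi.mul_apply] using hz
      rw [h4]
      exact setLIntegral_rect hρac hS hB
    rw [h2, h3]
  have hRHS : ∫ ω in Z ⁻¹' S, (W ⁻¹' B).indicator (fun _ => (1:ℝ)) ω ∂P
      = (ρ (S ×ˢ B)).toReal := by
    rw [setIntegral_indicator (hW hB), setIntegral_const, measureReal_def]
    have : P (Z ⁻¹' S ∩ W ⁻¹' B) = ρ (S ×ˢ B) := by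
      rw [← hρ, Measure.map_apply (hZ.prodMk hW) (hS.prod hB), Set.mk_preimage_prod]
    rw [this]; simp
  rw [hLHS, hRHS]

end CE

section Joint
variable {Ω : Type*} [mΩ : MeasurableSpace Ω] {P : Measure Ω} [IsProbabilityMeasure P]
  {Z W : Ω → ℝ} {ρ : Measure (ℝ × ℝ)} {ζ : Measure ℝ}

/-- The joint law of `(Z, Y₁, Y₂)` factorizes when `Y₁, Y₂` are conditionally independent
given `Z`. -/
lemma joint_eq_withDensity {Y₁ Y₂ : Ω → ℝ} [StandardBorelSpace Ω]
    (hZ : Measurable Z) (hY₁ : Measurable Y₁) (hY₂ : Measurable Y₂)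
    (hci : CondIndepFun (MeasurableSpace.comap Z inferInstance) hZ.comap_le Y₁ Y₂ P)
    {ρ₁ ρ₂ : Measure (ℝ × ℝ)}
    (hρ₁ : P.map (fun ω => (Z ω, Y₁ ω)) = ρ₁) (hρ₁ac : ρ₁ ≪ (volume : Measure (ℝ × ℝ)))
    (hρ₂ : P.map (fun ω => (Z ω, Y₂ ω)) = ρ₂) (hρ₂ac : ρ₂ ≪ (volume : Measure (ℝ × ℝ)))
    (hζ : P.map Z = ζ) (hζac : ζ ≪ volume) :
    P.map (fun ω => (Z ω, Y₁ ω, Y₂ ω)) = (volume : Measure (ℝ × ℝ × ℝ)).withDensity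
      (fun x => ρ₁.rnDeriv volume (x.1, x.2.1) * ρ₂.rnDeriv volume (x.1, x.2.2)
        * (ζ.rnDeriv volume x.1)⁻¹) := by
  have hρ₁P : IsProbabilityMeasure ρ₁ := hρ₁ ▸ Measure.isProbabilityMeasure_map (hZ.prodMk hY₁).aemeasurable
  have hρ₂P : IsProbabilityMeasure ρ₂ := hρ₂ ▸ Measure.isProbabilityMeasure_map (hZ.prodMk hY₂).aemeasurable
  have hζP : IsProbabilityMeasure ζ := hζ ▸ Measure.isProbabilityMeasure_map hZ.aemeasurable
  have htriple : Measurable (fun ω => (Z ω, Y₁ ω, Y₂ ω)) := hZ.prodMk (hY₁.prodMk hY₂)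
  have hμ₃P : IsProbabilityMeasure (P.map (fun ω => (Z ω, Y₁ ω, Y₂ ω))) :=
    Measure.isProbabilityMeasure_map htriple.aemeasurable
  have hfst₁ : ρ₁.map Prod.fst = ζ := by
    rw [← hρ₁, ← hζ, Measure.map_map measurable_fst (hZ.prodMk hY₁)]; rfl
  have hfst₂ : ρ₂.map Prod.fst = ζ := by
    rw [← hρ₂, ← hζ, Measure.map_map measurable_fst (hZ.prodMk hY₂)]; rfl
  have hm : MeasurableSpace.comap Z inferInstance ≤ mΩ := hZ.comap_le
  set f₁ := ρ₁.rnDeriv (volume : Measure (ℝ × ℝ))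
  set f₂ := ρ₂.rnDeriv (volume : Measure (ℝ × ℝ))
  set fZ := ζ.rnDeriv (volume : Measure ℝ)
  have hf₁m : Measurable f₁ := Measure.measurable_rnDeriv _ _
  have hf₂m : Measurable f₂ := Measure.measurable_rnDeriv _ _
  have hfZm : Measurable fZ := Measure.measurable_rnDeriv _ _
  set g₀ : ℝ × ℝ × ℝ → ℝ≥0∞ := fun x => f₁ (x.1, x.2.1) * f₂ (x.1, x.2.2) * (fZ x.1)⁻¹
    with hg₀def
  have hg₀m : Measurable g₀ := by
    refine Measurable.mul (Measurable.mul ?_ ?_) (hfZm.comp measurable_fst).inv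
    · exact hf₁m.comp (measurable_fst.prodMk (measurable_fst.comp measurable_snd))
    · exact hf₂m.comp (measurable_fst.prodMk (measurable_snd.comp measurable_snd))
  -- the rectangle computation
  have key : ∀ A B C : Set ℝ, MeasurableSet A → MeasurableSet B → MeasurableSet C →
      (P.map (fun ω => (Z ω, Y₁ ω, Y₂ ω))) (A ×ˢ B ×ˢ C)
        = ((volume : Measure (ℝ × ℝ × ℝ)).withDensity g₀) (A ×ˢ B ×ˢ C) := by
    intro A B C hA hB hC
    set m₁ : ℝ → ℝ≥0∞ := fun z => ∫⁻ y in B, f₁ (z, y) ∂volume with hm₁def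
    set m₂ : ℝ → ℝ≥0∞ := fun z => ∫⁻ y in C, f₂ (z, y) ∂volume with hm₂def
    set q₁ : ℝ → ℝ≥0∞ := fun z => m₁ z / fZ z with hq₁def
    set q₂ : ℝ → ℝ≥0∞ := fun z => m₂ z / fZ z with hq₂def
    have hm₁m : Measurable m₁ := Measurable.lintegral_prod_right hf₁m
    have hm₂m : Measurable m₂ := Measurable.lintegral_prod_right hf₂m
    have hq₁m : Measurable q₁ := hm₁m.div hfZm
    have hq₂m : Measurable q₂ := hm₂m.div hfZm
    have hfacts₁ := ratio_facts hρ₁ac hζac hfst₁ hB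
    have hfacts₂ := ratio_facts hρ₂ac hζac hfst₂ hC
    -- a.e. identity: fZ * (q₁ * q₂) = m₁ * m₂ * fZ⁻¹
    have hkey_ae : ∀ᵐ z ∂(volume : Measure ℝ),
        fZ z * (q₁ z * q₂ z) = m₁ z * m₂ z * (fZ z)⁻¹ := by
      filter_upwards [hfacts₁, hfacts₂] with z h1 h2
      have e1 : fZ z * (q₁ z * q₂ z) = (fZ z * q₁ z) * q₂ z := by ring
      rw [e1, h1.2]
      rw [hq₂def]
      simp only []
      rw [ENNReal.div_eq_inv_mul]
      ring
    have hq_le : ∀ᵐ z ∂(volume : Measure ℝ), q₁ z * q₂ z ≤ 1 := by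
      filter_upwards [hfacts₁, hfacts₂] with z h1 h2
      calc q₁ z * q₂ z ≤ 1 * 1 := mul_le_mul' h1.1 h2.1
      _ = 1 := by simp
    -- finiteness of the RHS integral
    have hbound : ∫⁻ z in A, m₁ z * m₂ z * (fZ z)⁻¹ ∂volume ≤ ζ A := by
      have : ∫⁻ z in A, m₁ z * m₂ z * (fZ z)⁻¹ ∂volume
          = ∫⁻ z in A, fZ z * (q₁ z * q₂ z) ∂volume :=
        (lintegral_congr_ae (ae_restrict_of_ae hkey_ae)).symm
      rw [this]
      calc ∫⁻ z in A, fZ z * (q₁ z * q₂ z) ∂volume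
          ≤ ∫⁻ z in A, fZ z * 1 ∂volume := by
            refine lintegral_mono_ae (ae_restrict_of_ae ?_)
            filter_upwards [hq_le] with z hz
            exact mul_le_mul_right hz _
        _ = ζ A := by
            simp only [mul_one]
            exact Measure.setLIntegral_rnDeriv hζac A
    -- the LHS probability as a real integral
    have hEmeas : MeasurableSet (A ×ˢ B ×ˢ C) := hA.prod (hB.prod hC)
    have hpre : (fun ω => (Z ω, Y₁ ω, Y₂ ω)) ⁻¹' (A ×ˢ B ×ˢ C)
        = Z ⁻¹' A ∩ (Y₁ ⁻¹' B ∩ Y₂ ⁻¹' C) := by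
      rw [Set.mk_preimage_prod, Set.mk_preimage_prod]
    have hL1 : (P.map (fun ω => (Z ω, Y₁ ω, Y₂ ω))) (A ×ˢ B ×ˢ C)
        = P (Z ⁻¹' A ∩ (Y₁ ⁻¹' B ∩ Y₂ ⁻¹' C)) := by
      rw [Measure.map_apply htriple hEmeas, hpre]
    -- real-valued computation
    have htmeas : MeasurableSet (Y₁ ⁻¹' B ∩ Y₂ ⁻¹' C) := (hY₁ hB).inter (hY₂ hC)
    have hZAm : MeasurableSet[MeasurableSpace.comap Z inferInstance] (Z ⁻¹' A) := ⟨A, hA, rfl⟩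
    have hR1 : (P (Z ⁻¹' A ∩ (Y₁ ⁻¹' B ∩ Y₂ ⁻¹' C))).toReal
        = ∫ ω in Z ⁻¹' A, (Y₁ ⁻¹' B ∩ Y₂ ⁻¹' C).indicator (fun _ => (1:ℝ)) ω ∂P := by
      rw [setIntegral_indicator htmeas, setIntegral_const, measureReal_def]
      simp
    have hcond := (condIndepFun_iff_condExp_inter_preimage_eq_mul hY₁ hY₂).mp hci B C hB hC
    have hce₁ := condexp_indicator_ae hZ hY₁ hρ₁ hρ₁ac hζ hζac hB
    have hce₂ := condexp_indicator_ae hZ hY₂ hρ₂ hρ₂ac hζ hζac hC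
    have hR2 : ∫ ω in Z ⁻¹' A, (Y₁ ⁻¹' B ∩ Y₂ ⁻¹' C).indicator (fun _ => (1:ℝ)) ω ∂P
        = ∫ ω in Z ⁻¹' A, (q₁ (Z ω)).toReal * (q₂ (Z ω)).toReal ∂P := by
      rw [← setIntegral_condExp hm ((integrable_const (1:ℝ)).indicator htmeas) hZAm]
      refine setIntegral_congr_ae (hm _ hZAm) ?_
      filter_upwards [hcond, hce₁, hce₂] with ω h1 h2 h3 _
      rw [h1, ← h2, ← h3]
    have hq_le_P : ∀ᵐ ω ∂P, q₁ (Z ω) * q₂ (Z ω) ≤ 1 := by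
      have h1 : ∀ᵐ z ∂(P.map Z), q₁ z * q₂ z ≤ 1 := hζ ▸ hζac.ae_le hq_le
      exact (ae_map_iff hZ.aemeasurable
        (measurableSet_le (hq₁m.mul hq₂m) measurable_const)).mp h1
    have hR3 : ∫ ω in Z ⁻¹' A, (q₁ (Z ω)).toReal * (q₂ (Z ω)).toReal ∂P
        = (∫⁻ z in A, q₁ z * q₂ z ∂ζ).toReal := by
      have h1 : ∫ z in A, (q₁ z * q₂ z).toReal ∂ζ
          = ∫ ω in Z ⁻¹' A, (q₁ (Z ω) * q₂ (Z ω)).toReal ∂P := by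
        rw [← hζ]
        exact setIntegral_map hA ((hq₁m.mul hq₂m).ennreal_toReal).aestronglyMeasurable
          hZ.aemeasurable
      have h2 : ∫ ω in Z ⁻¹' A, (q₁ (Z ω)).toReal * (q₂ (Z ω)).toReal ∂P
          = ∫ ω in Z ⁻¹' A, (q₁ (Z ω) * q₂ (Z ω)).toReal ∂P := by
        simp [ENNReal.toReal_mul]
      rw [h2, ← h1]
      refine integral_toReal ((hq₁m.mul hq₂m).aemeasurable) ?_
      refine ae_restrict_of_ae ?_
      filter_upwards [hζac.ae_le hq_le] with z hz using lt_of_le_of_lt hz ENNReal.one_lt_top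
    have hR4 : ∫⁻ z in A, q₁ z * q₂ z ∂ζ = ∫⁻ z in A, m₁ z * m₂ z * (fZ z)⁻¹ ∂volume := by
      conv_lhs => rw [← Measure.withDensity_rnDeriv_eq ζ volume hζac]
      rw [restrict_withDensity hA,
        lintegral_withDensity_eq_lintegral_mul _ hfZm (g := fun z => q₁ z * q₂ z) (hq₁m.mul hq₂m)]
      refine lintegral_congr_ae (ae_restrict_of_ae ?_)
      filter_upwards [hkey_ae] with z hz
      simpa [Pi.mul_apply] using hz
    -- the RHS withDensity value
    have hW1 : ((volume : Measure (ℝ × ℝ × ℝ)).withDensity g₀) (A ×ˢ B ×ˢ C)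
        = ∫⁻ z in A, m₁ z * m₂ z * (fZ z)⁻¹ ∂volume := by
      rw [withDensity_apply _ hEmeas, Measure.volume_eq_prod ℝ (ℝ × ℝ), ← Measure.prod_restrict,
        lintegral_prod _ hg₀m.aemeasurable]
      refine lintegral_congr fun z => ?_
      have hinner : ∫⁻ w in B ×ˢ C, f₁ (z, w.1) * f₂ (z, w.2) ∂(volume : Measure (ℝ × ℝ))
          = m₁ z * m₂ z := by
        rw [Measure.volume_eq_prod ℝ ℝ, ← Measure.prod_restrict]
        exact lintegral_prod_mul (hf₁m.comp (measurable_const.prodMk measurable_id)).aemeasurable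
          (hf₂m.comp (measurable_const.prodMk measurable_id)).aemeasurable
      calc ∫⁻ w in B ×ˢ C, g₀ (z, w) ∂(volume : Measure (ℝ × ℝ))
          = ∫⁻ w in B ×ˢ C, f₁ (z, w.1) * f₂ (z, w.2) * (fZ z)⁻¹ ∂(volume : Measure (ℝ × ℝ)) :=
            rfl
        _ = (∫⁻ w in B ×ˢ C, f₁ (z, w.1) * f₂ (z, w.2) ∂(volume : Measure (ℝ × ℝ))) * (fZ z)⁻¹ :=
            lintegral_mul_const _ ((hf₁m.comp (measurable_const.prodMk measurable_fst)).mul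
              (hf₂m.comp (measurable_const.prodMk measurable_snd)))
        _ = m₁ z * m₂ z * (fZ z)⁻¹ := by rw [hinner]
    -- put it together
    have hfin1 : (P.map (fun ω => (Z ω, Y₁ ω, Y₂ ω))) (A ×ˢ B ×ˢ C) ≠ ∞ :=
      (measure_lt_top _ _).ne
    have hfin2 : ∫⁻ z in A, m₁ z * m₂ z * (fZ z)⁻¹ ∂volume ≠ ∞ :=
      (lt_of_le_of_lt hbound (measure_lt_top _ _)).ne
    rw [hW1]
    refine (ENNReal.toReal_eq_toReal_iff' hfin1 hfin2).mp ?_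
    rw [hL1, hR1, hR2, hR3, hR4]
  -- extend from rectangles to all sets
  have hgen : (inferInstance : MeasurableSpace (ℝ × ℝ × ℝ)) = MeasurableSpace.generateFrom
      (image2 (· ×ˢ ·) { s : Set ℝ | MeasurableSet s }
        (image2 (· ×ˢ ·) { s : Set ℝ | MeasurableSet s } { t : Set ℝ | MeasurableSet t })) := by
    refine (generateFrom_eq_prod MeasurableSpace.generateFrom_measurableSet generateFrom_prod
      isCountablySpanning_measurableSet ?_).symm
    exact isCountablySpanning_measurableSet.prod isCountablySpanning_measurableSet
  refine ext_of_generate_finite _ hgen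
    (IsPiSystem.prod MeasurableSpace.isPiSystem_measurableSet isPiSystem_prod) ?_ ?_
  · rintro _ ⟨A, hA, _, ⟨B, hB, C, hC, rfl⟩, rfl⟩
    exact key A B C hA hB hC
  · have := key univ univ univ MeasurableSet.univ MeasurableSet.univ MeasurableSet.univ
    simpa [Set.prod_univ, Set.univ_prod] using this


end Joint

/-- Entropy integral of the law of `(X - Y, Y)` for independent `X ∼ τ`, `Y ∼ σm`. -/
lemma pair_log_density {τ σm : Measure ℝ} [IsProbabilityMeasure τ] [IsProbabilityMeasure σm]
    (hτac : τ ≪ volume) (hσac : σm ≪ volume)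
    (hIτ : Integrable (fun x => log (τ.rnDeriv volume x).toReal) τ)
    (hIσ : Integrable (fun x => log (σm.rnDeriv volume x).toReal) σm) :
    Integrable (fun p => log (((τ.prod σm).map eT).rnDeriv volume p).toReal)
        ((τ.prod σm).map eT) ∧
      ∫ p, log (((τ.prod σm).map eT).rnDeriv volume p).toReal ∂((τ.prod σm).map eT)
        = ∫ x, log (τ.rnDeriv volume x).toReal ∂τ
          + ∫ y, log (σm.rnDeriv volume y).toReal ∂σm := by
  set μp := τ.prod σm with hμpdef
  set ρ := μp.map eT with hρdef
  have hfτm : Measurable (fun x => log (τ.rnDeriv volume x).toReal) :=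
    (Measure.measurable_rnDeriv τ volume).ennreal_toReal.log
  have hfσm : Measurable (fun x => log (σm.rnDeriv volume x).toReal) :=
    (Measure.measurable_rnDeriv σm volume).ennreal_toReal.log
  have hfρm : Measurable (fun p => log (ρ.rnDeriv (volume : Measure (ℝ × ℝ)) p).toReal) :=
    (Measure.measurable_rnDeriv ρ volume).ennreal_toReal.log
  have hprodac : μp ≪ (volume : Measure (ℝ × ℝ)) := by
    rw [Measure.volume_eq_prod ℝ ℝ]; exact hτac.prod hσac
  have hpull : (fun p => ρ.rnDeriv (volume : Measure (ℝ × ℝ)) (eT p))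
      =ᵐ[(volume : Measure (ℝ × ℝ))] μp.rnDeriv volume := by
    have h := eT.measurableEmbedding.rnDeriv_map μp (volume : Measure (ℝ × ℝ))
    rwa [eT_map_volume] at h
  have hprod := rnDeriv_prod_ae hτac hσac
  have hfst : μp.map Prod.fst = τ := by
    rw [hμpdef, Measure.map_fst_prod]; simp
  have hsnd : μp.map Prod.snd = σm := by
    rw [hμpdef, Measure.map_snd_prod]; simp
  -- positivity/finiteness facts
  have hτfacts : ∀ᵐ x ∂τ, 0 < τ.rnDeriv volume x ∧ τ.rnDeriv volume x < ∞ :=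
    (Measure.rnDeriv_pos hτac).and (hτac.ae_le (Measure.rnDeriv_lt_top τ volume))
  have hσfacts : ∀ᵐ x ∂σm, 0 < σm.rnDeriv volume x ∧ σm.rnDeriv volume x < ∞ :=
    (Measure.rnDeriv_pos hσac).and (hσac.ae_le (Measure.rnDeriv_lt_top σm volume))
  have hτset : MeasurableSet {x : ℝ | 0 < τ.rnDeriv volume x ∧ τ.rnDeriv volume x < ∞} :=
    ((Measure.measurable_rnDeriv τ volume) measurableSet_Ioi).inter
      ((Measure.measurable_rnDeriv τ volume) measurableSet_Iio)
  have hσset : MeasurableSet {x : ℝ | 0 < σm.rnDeriv volume x ∧ σm.rnDeriv volume x < ∞} :=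
    ((Measure.measurable_rnDeriv σm volume) measurableSet_Ioi).inter
      ((Measure.measurable_rnDeriv σm volume) measurableSet_Iio)
  have hτμp : ∀ᵐ p ∂μp, 0 < τ.rnDeriv volume p.1 ∧ τ.rnDeriv volume p.1 < ∞ :=
    (ae_map_iff measurable_fst.aemeasurable hτset).mp (hfst ▸ hτfacts)
  have hσμp : ∀ᵐ p ∂μp, 0 < σm.rnDeriv volume p.2 ∧ σm.rnDeriv volume p.2 < ∞ :=
    (ae_map_iff measurable_snd.aemeasurable hσset).mp (hsnd ▸ hσfacts)
  have hae : ∀ᵐ p ∂μp, log (ρ.rnDeriv (volume : Measure (ℝ × ℝ)) (eT p)).toReal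
      = log (τ.rnDeriv volume p.1).toReal + log (σm.rnDeriv volume p.2).toReal := by
    filter_upwards [hprodac.ae_le (hpull.trans hprod), hτμp, hσμp] with p h1 h2 h3
    rw [h1, ENNReal.toReal_mul, Real.log_mul
      (ENNReal.toReal_pos h2.1.ne' h2.2.ne).ne' (ENNReal.toReal_pos h3.1.ne' h3.2.ne).ne']
  have hJ1 : Integrable (fun p => log (τ.rnDeriv volume p.1).toReal) μp := by
    have h := integrable_map_measure (μ := μp) (f := Prod.fst)
      (g := fun x => log (τ.rnDeriv volume x).toReal)
      hfτm.aestronglyMeasurable measurable_fst.aemeasurable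
    rw [hfst] at h
    exact h.mp hIτ
  have hJ2 : Integrable (fun p => log (σm.rnDeriv volume p.2).toReal) μp := by
    have h := integrable_map_measure (μ := μp) (f := Prod.snd)
      (g := fun x => log (σm.rnDeriv volume x).toReal)
      hfσm.aestronglyMeasurable measurable_snd.aemeasurable
    rw [hsnd] at h
    exact h.mp hIσ
  have hIcomp : Integrable (fun p => log (ρ.rnDeriv (volume : Measure (ℝ × ℝ)) (eT p)).toReal)
      μp := by
    refine (hJ1.add hJ2).congr ?_
    filter_upwards [hae] with p hp
    simpa using hp.symm
  have hIρ : Integrable (fun p => log (ρ.rnDeriv (volume : Measure (ℝ × ℝ)) p).toReal) ρ := by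
    rw [hρdef]
    exact (integrable_map_measure hfρm.aestronglyMeasurable
      eT.measurable.aemeasurable).mpr hIcomp
  refine ⟨hIρ, ?_⟩
  have h1 : ∫ p, log (ρ.rnDeriv (volume : Measure (ℝ × ℝ)) p).toReal ∂ρ
      = ∫ p, log (ρ.rnDeriv (volume : Measure (ℝ × ℝ)) (eT p)).toReal ∂μp := by
    rw [hρdef]
    exact integral_map eT.measurable.aemeasurable hfρm.aestronglyMeasurable
  have h2 : ∫ x, log (τ.rnDeriv volume x).toReal ∂τ
      = ∫ p, log (τ.rnDeriv volume p.1).toReal ∂μp := by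
    have h := integral_map (μ := μp) (φ := Prod.fst) measurable_fst.aemeasurable
      (f := fun x => log (τ.rnDeriv volume x).toReal) hfτm.aestronglyMeasurable
    rw [hfst] at h
    exact h
  have h3 : ∫ y, log (σm.rnDeriv volume y).toReal ∂σm
      = ∫ p, log (σm.rnDeriv volume p.2).toReal ∂μp := by
    have h := integral_map (μ := μp) (φ := Prod.snd) measurable_snd.aemeasurable
      (f := fun x => log (σm.rnDeriv volume x).toReal) hfσm.aestronglyMeasurable
    rw [hsnd] at h
    exact h
  rw [h1, h2, h3, integral_congr_ae hae, integral_add hJ1 hJ2]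


end CondIndepEnt

open CondIndepEnt
open scoped ENNReal

/-- Suppose `X, Y` are independent continuous random variables, `Z = X - Y`, and
`(X₁,Y₁)`, `(X₂,Y₂)` are two conditionally independent versions of `(X,Y)` given `Z`.
If all relevant differential entropies exist and are finite, then
`h(Z,Y₁,Y₂) + h(Z) - h(Y₁) - h(Y₂) = h(X₁) + h(X₂)`. -/
theorem cond_indep_entropy_identity
    {Ω₀ : Type*} [MeasurableSpace Ω₀] (P₀ : Measure Ω₀) [IsProbabilityMeasure P₀]
    {Ω : Type*} [MeasurableSpace Ω] [StandardBorelSpace Ω]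
    (P : Measure Ω) [IsProbabilityMeasure P]
    (X Y : Ω₀ → ℝ) (hX : Measurable X) (hY : Measurable Y) (hindep : IndepFun X Y P₀)
    (X₁ Y₁ X₂ Y₂ Z : Ω → ℝ)
    (hX₁ : Measurable X₁) (hY₁ : Measurable Y₁) (hX₂ : Measurable X₂)
    (hY₂ : Measurable Y₂) (hZ : Measurable Z)
    (hZ₁ : ∀ ω, X₁ ω - Y₁ ω = Z ω) (hZ₂ : ∀ ω, X₂ ω - Y₂ ω = Z ω)
    (hid₁ : IdentDistrib (fun ω => (X₁ ω, Y₁ ω)) (fun ω => (X ω, Y ω)) P P₀)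
    (hid₂ : IdentDistrib (fun ω => (X₂ ω, Y₂ ω)) (fun ω => (X ω, Y ω)) P P₀)
    (hci : CondIndepFun (MeasurableSpace.comap Z inferInstance) hZ.comap_le
      (fun ω => (X₁ ω, Y₁ ω)) (fun ω => (X₂ ω, Y₂ ω)) P)
    (h1 : FiniteDent volume P (fun ω => (Z ω, Y₁ ω, Y₂ ω)))
    (h2 : FiniteDent volume P Z) (h3 : FiniteDent volume P Y₁)
    (h4 : FiniteDent volume P Y₂) (h5 : FiniteDent volume P X₁)
    (h6 : FiniteDent volume P X₂) :
    dent volume P (fun ω => (Z ω, Y₁ ω, Y₂ ω)) + dent volume P Z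
        - dent volume P Y₁ - dent volume P Y₂ =
      dent volume P X₁ + dent volume P X₂ := by
  have hpairmeas₁ : Measurable (fun ω => (X₁ ω, Y₁ ω)) := hX₁.prodMk hY₁
  have hpairmeas₂ : Measurable (fun ω => (X₂ ω, Y₂ ω)) := hX₂.prodMk hY₂
  have htriple : Measurable (fun ω => (Z ω, Y₁ ω, Y₂ ω)) := hZ.prodMk (hY₁.prodMk hY₂)
  set τ : Measure ℝ := P₀.map X with hτdef
  set σm : Measure ℝ := P₀.map Y with hσdef
  have hτ₁ : P.map X₁ = τ := (hid₁.comp measurable_fst).map_eq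
  have hτ₂ : P.map X₂ = τ := (hid₂.comp measurable_fst).map_eq
  have hσ₁ : P.map Y₁ = σm := (hid₁.comp measurable_snd).map_eq
  have hσ₂ : P.map Y₂ = σm := (hid₂.comp measurable_snd).map_eq
  have hτP : IsProbabilityMeasure τ := Measure.isProbabilityMeasure_map hX.aemeasurable
  have hσP : IsProbabilityMeasure σm := Measure.isProbabilityMeasure_map hY.aemeasurable
  have hprodlaw : P₀.map (fun ω => (X ω, Y ω)) = τ.prod σm :=
    (indepFun_iff_map_prod_eq_prod_map_map hX.aemeasurable hY.aemeasurable).mp hindep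
  have hpair₁ : P.map (fun ω => (X₁ ω, Y₁ ω)) = τ.prod σm := hid₁.map_eq.trans hprodlaw
  have hpair₂ : P.map (fun ω => (X₂ ω, Y₂ ω)) = τ.prod σm := hid₂.map_eq.trans hprodlaw
  set ρ : Measure (ℝ × ℝ) := (τ.prod σm).map eT with hρdef
  have hρ₁ : P.map (fun ω => (Z ω, Y₁ ω)) = ρ := by
    have hc : (fun ω => (Z ω, Y₁ ω)) = (⇑eT) ∘ (fun ω => (X₁ ω, Y₁ ω)) := by
      funext ω
      show (Z ω, Y₁ ω) = eT (X₁ ω, Y₁ ω)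
      rw [eT_apply]
      simp [hZ₁ ω]
    rw [hc, ← Measure.map_map eT.measurable hpairmeas₁, hpair₁]
  have hρ₂ : P.map (fun ω => (Z ω, Y₂ ω)) = ρ := by
    have hc : (fun ω => (Z ω, Y₂ ω)) = (⇑eT) ∘ (fun ω => (X₂ ω, Y₂ ω)) := by
      funext ω
      show (Z ω, Y₂ ω) = eT (X₂ ω, Y₂ ω)
      rw [eT_apply]
      simp [hZ₂ ω]
    rw [hc, ← Measure.map_map eT.measurable hpairmeas₂, hpair₂]
  set ζ : Measure ℝ := P.map Z with hζdef
  have hζP : IsProbabilityMeasure ζ := Measure.isProbabilityMeasure_map hZ.aemeasurable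
  have hρP : IsProbabilityMeasure ρ := hρ₁ ▸ Measure.isProbabilityMeasure_map (hZ.prodMk hY₁).aemeasurable
  -- absolute continuity
  have hτac : τ ≪ volume := hτ₁ ▸ h5.1
  have hσac : σm ≪ volume := hσ₁ ▸ h3.1
  have hρac : ρ ≪ (volume : Measure (ℝ × ℝ)) := by
    have hprodac : τ.prod σm ≪ (volume : Measure (ℝ × ℝ)) := by
      rw [Measure.volume_eq_prod ℝ ℝ]; exact hτac.prod hσac
    rw [hρdef]
    calc (τ.prod σm).map eT ≪ (volume : Measure (ℝ × ℝ)).map eT :=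
          hprodac.map eT.measurable
      _ = volume := eT_map_volume
  have hζac : ζ ≪ volume := h2.1
  -- marginal integrabilities
  have hIτ : Integrable (fun x => Real.log (τ.rnDeriv volume x).toReal) τ := by
    have h := h5.2; rwa [hτ₁] at h
  have hIσ : Integrable (fun x => Real.log (σm.rnDeriv volume x).toReal) σm := by
    have h := h3.2; rwa [hσ₁] at h
  obtain ⟨hIρ, hIρ_eq⟩ := pair_log_density hτac hσac hIτ hIσ
  rw [← hρdef] at hIρ hIρ_eq
  -- conditional independence of Y₁, Y₂ given Z
  have hciY : CondIndepFun (MeasurableSpace.comap Z inferInstance) hZ.comap_le Y₁ Y₂ P :=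
    hci.comp measurable_snd measurable_snd
  -- factorization of the joint law
  have hμ₃eq := joint_eq_withDensity hZ hY₁ hY₂ hciY hρ₁ hρac hρ₂ hρac hζdef.symm hζac
  set μ₃ : Measure (ℝ × ℝ × ℝ) := P.map (fun ω => (Z ω, Y₁ ω, Y₂ ω)) with hμ₃def
  have hμ₃P : IsProbabilityMeasure μ₃ := Measure.isProbabilityMeasure_map htriple.aemeasurable
  have hμ₃ac : μ₃ ≪ (volume : Measure (ℝ × ℝ × ℝ)) := h1.1
  have hI₃ : Integrable (fun x => Real.log (μ₃.rnDeriv volume x).toReal) μ₃ := h1.2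
  set fρ := ρ.rnDeriv (volume : Measure (ℝ × ℝ)) with hfρdef
  set fZ := ζ.rnDeriv (volume : Measure ℝ) with hfZdef
  set f₃ := μ₃.rnDeriv (volume : Measure (ℝ × ℝ × ℝ)) with hf₃def
  have hfρm : Measurable fρ := Measure.measurable_rnDeriv _ _
  have hfZm : Measurable fZ := Measure.measurable_rnDeriv _ _
  have hg₀m : Measurable (fun x : ℝ × ℝ × ℝ =>
      fρ (x.1, x.2.1) * fρ (x.1, x.2.2) * (fZ x.1)⁻¹) := by
    refine Measurable.mul (Measurable.mul ?_ ?_) ((hfZm.comp measurable_fst).inv)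
    · exact hfρm.comp (measurable_fst.prodMk (measurable_fst.comp measurable_snd))
    · exact hfρm.comp (measurable_fst.prodMk (measurable_snd.comp measurable_snd))
  have hf₃g : f₃ =ᵐ[(volume : Measure (ℝ × ℝ × ℝ))]
      (fun x : ℝ × ℝ × ℝ => fρ (x.1, x.2.1) * fρ (x.1, x.2.2) * (fZ x.1)⁻¹) := by
    rw [hf₃def, hμ₃eq]
    exact Measure.rnDeriv_withDensity _ hg₀m
  -- projections
  have hπ₁m : Measurable (fun x : ℝ × ℝ × ℝ => (x.1, x.2.1)) :=
    measurable_fst.prodMk (measurable_fst.comp measurable_snd)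
  have hπ₂m : Measurable (fun x : ℝ × ℝ × ℝ => (x.1, x.2.2)) :=
    measurable_fst.prodMk (measurable_snd.comp measurable_snd)
  have hmap₁ : μ₃.map (fun x : ℝ × ℝ × ℝ => (x.1, x.2.1)) = ρ := by
    rw [hμ₃def, Measure.map_map hπ₁m htriple]; exact hρ₁
  have hmap₂ : μ₃.map (fun x : ℝ × ℝ × ℝ => (x.1, x.2.2)) = ρ := by
    rw [hμ₃def, Measure.map_map hπ₂m htriple]; exact hρ₂
  have hmapZ : μ₃.map Prod.fst = ζ := by
    rw [hμ₃def, Measure.map_map measurable_fst htriple]; exact rfl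
  -- a.e. positivity and finiteness facts transported to μ₃
  have hρfacts : ∀ᵐ p ∂ρ, 0 < fρ p ∧ fρ p < ∞ :=
    (Measure.rnDeriv_pos hρac).and (hρac.ae_le (Measure.rnDeriv_lt_top ρ volume))
  have hζfacts : ∀ᵐ z ∂ζ, 0 < fZ z ∧ fZ z < ∞ :=
    (Measure.rnDeriv_pos hζac).and (hζac.ae_le (Measure.rnDeriv_lt_top ζ volume))
  have hρset : MeasurableSet {p : ℝ × ℝ | 0 < fρ p ∧ fρ p < ∞} :=
    (hfρm measurableSet_Ioi).inter (hfρm measurableSet_Iio)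
  have hζset : MeasurableSet {z : ℝ | 0 < fZ z ∧ fZ z < ∞} :=
    (hfZm measurableSet_Ioi).inter (hfZm measurableSet_Iio)
  have hfacts₁ : ∀ᵐ x ∂μ₃, 0 < fρ (x.1, x.2.1) ∧ fρ (x.1, x.2.1) < ∞ :=
    (ae_map_iff hπ₁m.aemeasurable hρset).mp (hmap₁ ▸ hρfacts)
  have hfacts₂ : ∀ᵐ x ∂μ₃, 0 < fρ (x.1, x.2.2) ∧ fρ (x.1, x.2.2) < ∞ :=
    (ae_map_iff hπ₂m.aemeasurable hρset).mp (hmap₂ ▸ hρfacts)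
  have hfactsZ : ∀ᵐ x : ℝ × ℝ × ℝ ∂μ₃, 0 < fZ x.1 ∧ fZ x.1 < ∞ :=
    (ae_map_iff measurable_fst.aemeasurable hζset).mp (hmapZ ▸ hζfacts)
  -- the pointwise log identity
  have hsum_ae : ∀ᵐ x ∂μ₃, Real.log (f₃ x).toReal
      = Real.log (fρ (x.1, x.2.1)).toReal + Real.log (fρ (x.1, x.2.2)).toReal
        - Real.log (fZ x.1).toReal := by
    filter_upwards [hμ₃ac.ae_le hf₃g, hfacts₁, hfacts₂, hfactsZ] with x hx h1' h2' h3'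
    have ha : (fρ (x.1, x.2.1)).toReal ≠ 0 := (ENNReal.toReal_pos h1'.1.ne' h1'.2.ne).ne'
    have hb : (fρ (x.1, x.2.2)).toReal ≠ 0 := (ENNReal.toReal_pos h2'.1.ne' h2'.2.ne).ne'
    have hc : (fZ x.1).toReal ≠ 0 := (ENNReal.toReal_pos h3'.1.ne' h3'.2.ne).ne'
    rw [hx, ENNReal.toReal_mul, ENNReal.toReal_mul, ENNReal.toReal_inv,
      Real.log_mul (mul_ne_zero ha hb) (inv_ne_zero hc), Real.log_mul ha hb, Real.log_inv]
    ring
  -- integrabilities of the pieces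
  have hfρlogm : Measurable (fun p => Real.log (fρ p).toReal) := hfρm.ennreal_toReal.log
  have hfZlogm : Measurable (fun z => Real.log (fZ z).toReal) := hfZm.ennreal_toReal.log
  have hIZ : Integrable (fun z => Real.log (fZ z).toReal) ζ := h2.2
  have hI₁ : Integrable (fun x : ℝ × ℝ × ℝ => Real.log (fρ (x.1, x.2.1)).toReal) μ₃ := by
    have h := integrable_map_measure (μ := μ₃) (f := fun x : ℝ × ℝ × ℝ => (x.1, x.2.1))
      (g := fun p => Real.log (fρ p).toReal) hfρlogm.aestronglyMeasurable hπ₁m.aemeasurable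
    rw [hmap₁] at h
    exact h.mp hIρ
  have hI₂ : Integrable (fun x : ℝ × ℝ × ℝ => Real.log (fρ (x.1, x.2.2)).toReal) μ₃ := by
    have h := integrable_map_measure (μ := μ₃) (f := fun x : ℝ × ℝ × ℝ => (x.1, x.2.2))
      (g := fun p => Real.log (fρ p).toReal) hfρlogm.aestronglyMeasurable hπ₂m.aemeasurable
    rw [hmap₂] at h
    exact h.mp hIρ
  have hIZ₃ : Integrable (fun x : ℝ × ℝ × ℝ => Real.log (fZ x.1).toReal) μ₃ := by
    have h := integrable_map_measure (μ := μ₃) (f := Prod.fst)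
      (g := fun z => Real.log (fZ z).toReal) hfZlogm.aestronglyMeasurable
      measurable_fst.aemeasurable
    rw [hmapZ] at h
    exact h.mp hIZ
  -- split the entropy integral
  have e₁ : ∫ x, Real.log (fρ (x.1, x.2.1)).toReal ∂μ₃ = ∫ p, Real.log (fρ p).toReal ∂ρ := by
    have h := integral_map (μ := μ₃) (φ := fun x : ℝ × ℝ × ℝ => (x.1, x.2.1))
      hπ₁m.aemeasurable (f := fun p => Real.log (fρ p).toReal) hfρlogm.aestronglyMeasurable
    rw [hmap₁] at h
    exact h.symm
  have e₂ : ∫ x, Real.log (fρ (x.1, x.2.2)).toReal ∂μ₃ = ∫ p, Real.log (fρ p).toReal ∂ρ := by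
    have h := integral_map (μ := μ₃) (φ := fun x : ℝ × ℝ × ℝ => (x.1, x.2.2))
      hπ₂m.aemeasurable (f := fun p => Real.log (fρ p).toReal) hfρlogm.aestronglyMeasurable
    rw [hmap₂] at h
    exact h.symm
  have eZ : ∫ x : ℝ × ℝ × ℝ, Real.log (fZ x.1).toReal ∂μ₃
      = ∫ z, Real.log (fZ z).toReal ∂ζ := by
    have h := integral_map (μ := μ₃) (φ := Prod.fst) measurable_fst.aemeasurable
      (f := fun z => Real.log (fZ z).toReal) hfZlogm.aestronglyMeasurable
    rw [hmapZ] at h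
    exact h.symm
  have hI₃eq : ∫ x, Real.log (f₃ x).toReal ∂μ₃
      = ∫ p, Real.log (fρ p).toReal ∂ρ + ∫ p, Real.log (fρ p).toReal ∂ρ
        - ∫ z, Real.log (fZ z).toReal ∂ζ := by
    have hstep : ∫ a, (Real.log (fρ (a.1, a.2.1)).toReal + Real.log (fρ (a.1, a.2.2)).toReal
          - Real.log (fZ a.1).toReal) ∂μ₃
        = (∫ a, (Real.log (fρ (a.1, a.2.1)).toReal + Real.log (fρ (a.1, a.2.2)).toReal) ∂μ₃)
          - ∫ a : ℝ × ℝ × ℝ, Real.log (fZ a.1).toReal ∂μ₃ := integral_sub (hI₁.add hI₂) hIZ₃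
    have hstep2 : ∫ a, (Real.log (fρ (a.1, a.2.1)).toReal
          + Real.log (fρ (a.1, a.2.2)).toReal) ∂μ₃
        = (∫ a : ℝ × ℝ × ℝ, Real.log (fρ (a.1, a.2.1)).toReal ∂μ₃)
          + ∫ a : ℝ × ℝ × ℝ, Real.log (fρ (a.1, a.2.2)).toReal ∂μ₃ := integral_add hI₁ hI₂
    rw [integral_congr_ae hsum_ae, hstep, hstep2, e₁, e₂, eZ]
  -- final assembly
  have hd₃ : dent volume P (fun ω => (Z ω, Y₁ ω, Y₂ ω)) = -∫ x, Real.log (f₃ x).toReal ∂μ₃ :=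
    rfl
  have hdZ : dent volume P Z = -∫ z, Real.log (fZ z).toReal ∂ζ := rfl
  have hdY₁ : dent volume P Y₁ = -∫ y, Real.log (σm.rnDeriv volume y).toReal ∂σm := by
    unfold dent; rw [hσ₁]
  have hdY₂ : dent volume P Y₂ = -∫ y, Real.log (σm.rnDeriv volume y).toReal ∂σm := by
    unfold dent; rw [hσ₂]
  have hdX₁ : dent volume P X₁ = -∫ x, Real.log (τ.rnDeriv volume x).toReal ∂τ := by
    unfold dent; rw [hτ₁]
  have hdX₂ : dent volume P X₂ = -∫ x, Real.log (τ.rnDeriv volume x).toReal ∂τ := by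
    unfold dent; rw [hτ₂]
  rw [hd₃, hdZ, hdY₁, hdY₂, hdX₁, hdX₂, hI₃eq, hIρ_eq]
  ring
end

section
/- If X, Y, Z, W are independent real-valued continuous random variables with all relevant differential entropies existing and finite, then h(X+Y+Z+W) + h(Y) + h(Z) ≤ h(X+Y) + h(Y+Z) + h(Z+W). -/
open MeasureTheory ProbabilityTheory
open scoped ENNReal

section AuxiliaryLemmas

lemma cancel1 (A d c : ℝ≥0∞) : c * (A / (d * c)) ≤ A / d := by
  rcases eq_or_ne c 0 with rfl | hc0
  · simp
  rcases eq_or_ne c ∞ with rfl | hctop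
  · rcases eq_or_ne d 0 with rfl | hd0
    · rcases eq_or_ne A 0 with rfl | hA0
      · simp
      · simp [ENNReal.div_zero hA0]
    · rw [ENNReal.mul_top hd0, ENNReal.div_top]
      simp
  · have : A / (d * c) = A * (d⁻¹ * c⁻¹) := by
      rw [div_eq_mul_inv, ENNReal.mul_inv (Or.inr hctop) (Or.inr hc0)]
    rw [this]
    apply le_of_eq
    calc c * (A * (d⁻¹ * c⁻¹)) = A * d⁻¹ * (c⁻¹ * c) := by ring
      _ = A * d⁻¹ := by rw [ENNReal.inv_mul_cancel hc0 hctop, mul_one]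
      _ = A / d := (div_eq_mul_inv A d).symm

lemma cancel2 (A d e f : ℝ≥0∞) : e * (f * (A / (d * (e * f)))) ≤ A / d := by
  rw [← mul_assoc]
  exact cancel1 A d (e * f)

lemma invmul_le_one (x : ℝ≥0∞) : x⁻¹ * x ≤ 1 := by
  rcases eq_or_ne x 0 with rfl | h0
  · simp
  rcases eq_or_ne x ∞ with rfl | htop
  · simp
  · rw [ENNReal.inv_mul_cancel h0 htop]

lemma conv_rnDeriv (m1 m2 : Measure ℝ) [IsProbabilityMeasure m1] [IsProbabilityMeasure m2]
    (h1 : m1 ≪ (volume : Measure ℝ)) (h2 : m2 ≪ (volume : Measure ℝ)) :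
    (fun s => ∫⁻ a, m1.rnDeriv volume a * m2.rnDeriv volume (s - a)) =ᵐ[(volume : Measure ℝ)]
      ((m1.prod m2).map (fun p : ℝ × ℝ => p.1 + p.2)).rnDeriv volume := by
  set f1 := m1.rnDeriv volume with hf1
  set f2 := m2.rnDeriv volume with hf2
  have hm1 : Measurable f1 := Measure.measurable_rnDeriv _ _
  have hm2 : Measurable f2 := Measure.measurable_rnDeriv _ _
  set k : ℝ → ℝ≥0∞ := fun s => ∫⁻ a, f1 a * f2 (s - a) with hk
  have hkm : Measurable k := by
    apply Measurable.lintegral_prod_right' (f := fun q : ℝ × ℝ => f1 q.2 * f2 (q.1 - q.2))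
    fun_prop
  have hwd : volume.withDensity k = (m1.prod m2).map (fun p : ℝ × ℝ => p.1 + p.2) := by
    ext E hE
    rw [withDensity_apply _ hE, Measure.map_apply (by fun_prop) hE,
      Measure.prod_apply (measurableSet_preimage (by fun_prop) hE)]
    have inner2 : ∀ a : ℝ, (∫⁻ s in E, f2 (s - a)) = m2 ((· + a) ⁻¹' E) := by
      intro a
      have hpre : MeasurableSet ((· + a) ⁻¹' E) := (measurable_add_const a) hE
      rw [← lintegral_indicator hE]
      have htr := lintegral_add_right_eq_self (μ := (volume : Measure ℝ))
        (f := E.indicator fun s => f2 (s - a)) a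
      rw [← htr]
      have : (fun t => E.indicator (fun s => f2 (s - a)) (t + a))
          = ((· + a) ⁻¹' E).indicator f2 := by
        funext t
        by_cases h : t + a ∈ E
        · simp [Set.indicator_apply, h, add_sub_cancel_right]
        · simp [Set.indicator_apply, h]
      rw [this, lintegral_indicator hpre, Measure.setLIntegral_rnDeriv h2]
    calc (∫⁻ s in E, k s)
        = ∫⁻ a, ∫⁻ s in E, f1 a * f2 (s - a) := by
          exact lintegral_lintegral_swap (by fun_prop)
      _ = ∫⁻ a, f1 a * ∫⁻ s in E, f2 (s - a) := by
          refine lintegral_congr fun a => ?_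
          exact lintegral_const_mul (f1 a) (by fun_prop)
      _ = ∫⁻ a, f1 a * m2 ((· + a) ⁻¹' E) := by
          refine lintegral_congr fun a => ?_
          rw [inner2]
      _ = ∫⁻ a, m2 ((· + a) ⁻¹' E) ∂m1 := by
          conv_rhs => rw [← Measure.withDensity_rnDeriv_eq m1 volume h1]
          rw [lintegral_withDensity_eq_lintegral_mul _ hm1]
          · rfl
          · have : (fun a : ℝ => m2 ((· + a) ⁻¹' E))
                = fun a : ℝ => m2 (Prod.mk a ⁻¹' {p : ℝ × ℝ | p.2 + p.1 ∈ E}) := by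
              funext a; rfl
            rw [this]
            exact measurable_measure_prodMk_left (measurableSet_preimage (by fun_prop : Measurable fun p : ℝ × ℝ => p.2 + p.1) hE)
      _ = ∫⁻ a, m2 (Prod.mk a ⁻¹' ((fun p : ℝ × ℝ => p.1 + p.2) ⁻¹' E)) ∂m1 := by
          refine lintegral_congr fun a => ?_
          congr 1
          ext s
          simp [add_comm]
  have hadd : (m1.prod m2).map (fun p : ℝ × ℝ => p.1 + p.2) = 0 + volume.withDensity k := by
    rw [zero_add, hwd]
  exact Measure.eq_rnDeriv hkm Measure.MutuallySingular.zero_left hadd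

lemma keyB (νX νY νZ νW : Measure ℝ)
    [IsProbabilityMeasure νX] [IsProbabilityMeasure νW] [SFinite νY] [SFinite νZ]
    (fY fZ fXY fYZ fZW fS : ℝ → ℝ≥0∞)
    (hmY : Measurable fY) (hmZ : Measurable fZ) (hmXY : Measurable fXY)
    (hmYZ : Measurable fYZ) (hmZW : Measurable fZW) (hmS : Measurable fS)
    (hνY : νY = volume.withDensity fY) (hνZ : νZ = volume.withDensity fZ)
    (hYZ1 : (∫⁻ t, fYZ t ∂volume) ≤ 1)
    (hconv : ∀ᵐ s ∂(volume : Measure ℝ), (∫⁻ a, fXY a * fZW (s - a) ∂volume) ≤ fS s) :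
    (∫⁻ x, ∫⁻ y, ∫⁻ z, ∫⁻ w,
      (fXY (x + y) * (fYZ (y + z) * fZW (z + w))) /
        (fS (x + y + z + w) * (fY y * fZ z)) ∂νW ∂νZ ∂νY ∂νX) ≤ 1 := by
  set g : ℝ → ℝ≥0∞ := fun t => ∫⁻ x, fYZ (t - x) ∂νX with hg
  set k : ℝ → ℝ≥0∞ := fun s => ∫⁻ a, fXY a * fZW (s - a) ∂volume with hk
  have hgm : Measurable g :=
    Measurable.lintegral_prod_right' (f := fun q : ℝ × ℝ => fYZ (q.1 - q.2)) (by fun_prop)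
  have hkm : Measurable k :=
    Measurable.lintegral_prod_right' (f := fun q : ℝ × ℝ => fXY q.2 * fZW (q.1 - q.2))
      (by fun_prop)
  set M : ℝ → ℝ → ℝ → ℝ → ℝ≥0∞ := fun x a z w =>
    fXY a * (fYZ (a - x + z) * (fZW (z + w) * (fS (a + z + w))⁻¹)) with hM
  set N : ℝ → ℝ → ℝ → ℝ → ℝ≥0∞ := fun x y z w =>
    fXY (x + y) * (fYZ (y + z) * (fZW (z + w) * (fS (x + y + z + w))⁻¹)) with hN
  set D : ℝ → ℝ → ℝ → ℝ → ℝ≥0∞ := fun x y z w =>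
    (fXY (x + y) * (fYZ (y + z) * fZW (z + w))) /
        (fS (x + y + z + w) * (fY y * fZ z)) with hD
  -- measurability facts
  have hDw : ∀ x y z, Measurable fun w => D x y z w := by intro x y z; fun_prop
  have hDzw : ∀ x y, Measurable fun z => ∫⁻ w, D x y z w ∂νW := by
    intro x y
    exact Measurable.lintegral_prod_right' (f := fun q : ℝ × ℝ => D x y q.1 q.2) (by fun_prop)
  have hMw : ∀ x a z, Measurable fun w => M x a z w := by intro x a z; fun_prop
  have hMzw : ∀ x a, Measurable fun z => ∫⁻ w, M x a z w ∂νW := by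
    intro x a
    exact Measurable.lintegral_prod_right' (f := fun q : ℝ × ℝ => M x a q.1 q.2) (by fun_prop)
  have hzD : ∀ x y, Measurable fun z => fZ z * ∫⁻ w, D x y z w ∂νW := by
    intro x y
    exact (hmZ.comp measurable_id).mul (hDzw x y)
  -- step 1+2 : strip densities and cancel
  have step12 : (∫⁻ x, ∫⁻ y, ∫⁻ z, ∫⁻ w, D x y z w ∂νW ∂νZ ∂νY ∂νX)
      ≤ ∫⁻ x, ∫⁻ y, ∫⁻ z, ∫⁻ w, N x y z w ∂νW ∂volume ∂volume ∂νX := by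
    refine lintegral_mono fun x => ?_
    have hy1 : Measurable fun y => ∫⁻ z, (fZ z) * ∫⁻ w, D x y z w ∂νW := by
      refine Measurable.lintegral_prod_right'
        (f := fun q : ℝ × ℝ => fZ q.2 * ∫⁻ w, D x q.1 q.2 w ∂νW) ?_
      refine Measurable.mul (by fun_prop) ?_
      exact Measurable.lintegral_prod_right'
        (f := fun r : (ℝ × ℝ) × ℝ => D x r.1.1 r.1.2 r.2) (by fun_prop)
    have ez : ∀ y, (∫⁻ z, (∫⁻ w, D x y z w ∂νW) ∂νZ)
        = ∫⁻ z, fZ z * ∫⁻ w, D x y z w ∂νW := by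
      intro y
      rw [hνZ, lintegral_withDensity_eq_lintegral_mul _ hmZ (hDzw x y)]
      rfl
    calc (∫⁻ y, ∫⁻ z, (∫⁻ w, D x y z w ∂νW) ∂νZ ∂νY)
        = ∫⁻ y, (∫⁻ z, fZ z * ∫⁻ w, D x y z w ∂νW) ∂νY := lintegral_congr ez
      _ = ∫⁻ y, fY y * ∫⁻ z, fZ z * ∫⁻ w, D x y z w ∂νW := by
          rw [hνY, lintegral_withDensity_eq_lintegral_mul _ hmY hy1]
          rfl
      _ ≤ ∫⁻ y, ∫⁻ z, ∫⁻ w, N x y z w ∂νW ∂volume ∂volume := by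
          refine lintegral_mono fun y => ?_
          rw [← lintegral_const_mul (fY y) (hzD x y)]
          refine lintegral_mono fun z => ?_
          rw [← lintegral_const_mul (fZ z) (hDw x y z),
            ← lintegral_const_mul (fY y) ((hDw x y z).const_mul (fZ z))]
          refine lintegral_mono fun w => ?_
          simp only [hD, hN]
          refine le_trans (cancel2 (fXY (x + y) * (fYZ (y + z) * fZW (z + w)))
            (fS (x + y + z + w)) (fY y) (fZ z)) (le_of_eq ?_)
          rw [div_eq_mul_inv]
          ring
  -- step 3 : translate y ↦ x + y
  have step3 : ∀ x, (∫⁻ y, ∫⁻ z, ∫⁻ w, N x y z w ∂νW ∂volume ∂volume)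
      = ∫⁻ a, ∫⁻ z, ∫⁻ w, M x a z w ∂νW ∂volume ∂volume := by
    intro x
    have hpt : ∀ y, (∫⁻ z, ∫⁻ w, N x y z w ∂νW ∂volume)
        = (fun a => ∫⁻ z, ∫⁻ w, M x a z w ∂νW ∂volume) (x + y) := by
      intro y
      refine lintegral_congr fun z => lintegral_congr fun w => ?_
      simp only [hM, hN]
      rw [show x + y - x + z = y + z by ring]
    rw [lintegral_congr hpt]
    exact lintegral_add_left_eq_self (μ := (volume : Measure ℝ))
      (fun a => ∫⁻ z, ∫⁻ w, M x a z w ∂νW ∂volume) x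
  -- step 4 : move the x integral inside
  have hM4 : Measurable fun q : (ℝ × ℝ) × ℝ × ℝ => M q.1.1 q.1.2 q.2.1 q.2.2 := by fun_prop
  have step4 : (∫⁻ x, ∫⁻ a, ∫⁻ z, ∫⁻ w, M x a z w ∂νW ∂volume ∂volume ∂νX)
      = ∫⁻ a, ∫⁻ z, ∫⁻ w, ∫⁻ x, M x a z w ∂νX ∂νW ∂volume ∂volume := by
    rw [lintegral_lintegral_swap (f := fun x a => ∫⁻ z, ∫⁻ w, M x a z w ∂νW ∂volume) ?m1]
    case m1 =>
      refine Measurable.aemeasurable ?_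
      exact Measurable.lintegral_prod_right'
        (f := fun q : (ℝ × ℝ) × ℝ => ∫⁻ w, M q.1.1 q.1.2 q.2 w ∂νW)
        (Measurable.lintegral_prod_right'
          (f := fun r : ((ℝ × ℝ) × ℝ) × ℝ => M r.1.1.1 r.1.1.2 r.1.2 r.2) (by fun_prop))
    refine lintegral_congr fun a => ?_
    rw [lintegral_lintegral_swap (f := fun x z => ∫⁻ w, M x a z w ∂νW) ?m2]
    case m2 =>
      refine Measurable.aemeasurable ?_
      exact Measurable.lintegral_prod_right'
        (f := fun q : (ℝ × ℝ) × ℝ => M q.1.1 a q.1.2 q.2) (by fun_prop)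
    refine lintegral_congr fun z => ?_
    rw [lintegral_lintegral_swap (f := fun x w => M x a z w) ?m3]
    case m3 => exact Measurable.aemeasurable (by fun_prop)
  -- step 5 : integrate out x
  have step5 : ∀ a z w, (∫⁻ x, M x a z w ∂νX)
      = fXY a * (g (a + z) * (fZW (z + w) * (fS (a + z + w))⁻¹)) := by
    intro a z w
    simp only [hM]
    rw [lintegral_const_mul _
      (by fun_prop : Measurable fun x => fYZ (a - x + z) * (fZW (z + w) * (fS (a + z + w))⁻¹))]
    congr 1
    rw [lintegral_mul_const _ (by fun_prop : Measurable fun x : ℝ => fYZ (a - x + z))]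
    congr 1
    refine lintegral_congr fun x => ?_
    rw [show a - x + z = a + z - x by ring]
  -- step 6 : translate z ↦ a + z
  have step6 : ∀ a,
      (∫⁻ z, ∫⁻ w, fXY a * (g (a + z) * (fZW (z + w) * (fS (a + z + w))⁻¹)) ∂νW ∂volume)
      = ∫⁻ t, ∫⁻ w, fXY a * (g t * (fZW (t - a + w) * (fS (t + w))⁻¹)) ∂νW ∂volume := by
    intro a
    have hpt : ∀ z, (∫⁻ w, fXY a * (g (a + z) * (fZW (z + w) * (fS (a + z + w))⁻¹)) ∂νW)
        = (fun t => ∫⁻ w, fXY a * (g t * (fZW (t - a + w) * (fS (t + w))⁻¹)) ∂νW) (a + z) := by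
      intro z
      refine lintegral_congr fun w => ?_
      rw [show a + z - a + w = z + w by ring]
    rw [lintegral_congr hpt]
    exact lintegral_add_left_eq_self (μ := (volume : Measure ℝ))
      (fun t => ∫⁻ w, fXY a * (g t * (fZW (t - a + w) * (fS (t + w))⁻¹)) ∂νW) a
  -- step 7 : move the a integral inside
  have step7 : (∫⁻ a, ∫⁻ t, ∫⁻ w,
        fXY a * (g t * (fZW (t - a + w) * (fS (t + w))⁻¹)) ∂νW ∂volume ∂volume)
      = ∫⁻ t, ∫⁻ w, ∫⁻ a,
        fXY a * (g t * (fZW (t - a + w) * (fS (t + w))⁻¹)) ∂volume ∂νW ∂volume := by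
    rw [lintegral_lintegral_swap (f := fun a t => ∫⁻ w,
      fXY a * (g t * (fZW (t - a + w) * (fS (t + w))⁻¹)) ∂νW) ?m4]
    case m4 =>
      refine Measurable.aemeasurable ?_
      exact Measurable.lintegral_prod_right'
        (f := fun q : (ℝ × ℝ) × ℝ => fXY q.1.1 * (g q.1.2 * (fZW (q.1.2 - q.1.1 + q.2) * (fS (q.1.2 + q.2))⁻¹)))
        (by fun_prop)
    refine lintegral_congr fun t => ?_
    rw [lintegral_lintegral_swap (f := fun a w =>
      fXY a * (g t * (fZW (t - a + w) * (fS (t + w))⁻¹))) ?m5]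
    case m5 => exact Measurable.aemeasurable (by fun_prop)
  -- step 8 : integrate out a
  have step8 : ∀ t w, (∫⁻ a, fXY a * (g t * (fZW (t - a + w) * (fS (t + w))⁻¹)) ∂volume)
      = (g t * (fS (t + w))⁻¹) * k (t + w) := by
    intro t w
    have hpt : ∀ a, fXY a * (g t * (fZW (t - a + w) * (fS (t + w))⁻¹))
        = (g t * (fS (t + w))⁻¹) * (fXY a * fZW (t + w - a)) := by
      intro a
      rw [show t - a + w = t + w - a by ring]
      ring
    rw [lintegral_congr hpt, lintegral_const_mul _ (by fun_prop)]
  -- the function g integrates to at most 1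
  have hgle : (∫⁻ t, g t ∂volume) ≤ 1 := by
    calc (∫⁻ t, g t ∂volume) = ∫⁻ x, ∫⁻ t, fYZ (t - x) ∂volume ∂νX :=
        lintegral_lintegral_swap (f := fun t x => fYZ (t - x))
          (Measurable.aemeasurable (by fun_prop))
      _ = ∫⁻ x, ∫⁻ t, fYZ t ∂volume ∂νX :=
        lintegral_congr fun x => lintegral_sub_right_eq_self fYZ x
      _ ≤ ∫⁻ _x, 1 ∂νX := lintegral_mono fun _ => hYZ1
      _ = 1 := by simp
  -- step 9 : final bound
  have step9 : (∫⁻ t, ∫⁻ w, (g t * (fS (t + w))⁻¹) * k (t + w) ∂νW ∂volume) ≤ 1 := by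
    rw [lintegral_lintegral_swap (f := fun t w => (g t * (fS (t + w))⁻¹) * k (t + w))
      (Measurable.aemeasurable (by fun_prop))]
    calc (∫⁻ w, ∫⁻ t, (g t * (fS (t + w))⁻¹) * k (t + w) ∂volume ∂νW)
        ≤ ∫⁻ w, ∫⁻ t, g t ∂volume ∂νW := by
          refine lintegral_mono fun w => ?_
          have hB : volume {s : ℝ | ¬ k s ≤ fS s} = 0 := by
            simpa [ae_iff] using hconv
          have hpre : volume ((fun t : ℝ => t + w) ⁻¹' {s | ¬ k s ≤ fS s}) = 0 :=
            (measurePreserving_add_right volume w).quasiMeasurePreserving.preimage_null hB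
          have hae : ∀ᵐ t ∂(volume : Measure ℝ), k (t + w) ≤ fS (t + w) := by
            rw [ae_iff]
            exact hpre
          refine lintegral_mono_ae (hae.mono fun t ht => ?_)
          calc (g t * (fS (t + w))⁻¹) * k (t + w)
              ≤ (g t * (fS (t + w))⁻¹) * fS (t + w) := mul_le_mul_right ht _
            _ = g t * ((fS (t + w))⁻¹ * fS (t + w)) := by ring
            _ ≤ g t * 1 := mul_le_mul_right (invmul_le_one _) _
            _ = g t := mul_one _
      _ ≤ ∫⁻ _w, 1 ∂νW := lintegral_mono fun _ => hgle
      _ = 1 := by simp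
  -- assemble
  calc (∫⁻ x, ∫⁻ y, ∫⁻ z, ∫⁻ w, D x y z w ∂νW ∂νZ ∂νY ∂νX)
      ≤ ∫⁻ x, ∫⁻ y, ∫⁻ z, ∫⁻ w, N x y z w ∂νW ∂volume ∂volume ∂νX := step12
    _ = ∫⁻ x, ∫⁻ a, ∫⁻ z, ∫⁻ w, M x a z w ∂νW ∂volume ∂volume ∂νX := lintegral_congr step3
    _ = ∫⁻ a, ∫⁻ z, ∫⁻ w, ∫⁻ x, M x a z w ∂νX ∂νW ∂volume ∂volume := step4
    _ = ∫⁻ a, ∫⁻ z, ∫⁻ w, fXY a * (g (a + z) * (fZW (z + w) * (fS (a + z + w))⁻¹)) ∂νW ∂volume ∂volume :=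
        lintegral_congr fun a => lintegral_congr fun z => lintegral_congr fun w => step5 a z w
    _ = ∫⁻ a, ∫⁻ t, ∫⁻ w, fXY a * (g t * (fZW (t - a + w) * (fS (t + w))⁻¹)) ∂νW ∂volume ∂volume :=
        lintegral_congr step6
    _ = ∫⁻ t, ∫⁻ w, ∫⁻ a, fXY a * (g t * (fZW (t - a + w) * (fS (t + w))⁻¹)) ∂volume ∂νW ∂volume :=
        step7
    _ = ∫⁻ t, ∫⁻ w, (g t * (fS (t + w))⁻¹) * k (t + w) ∂νW ∂volume :=
        lintegral_congr fun t => lintegral_congr fun w => step8 t w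
    _ ≤ 1 := step9

end AuxiliaryLemmas

/-- If `X, Y, Z, W` are independent continuous random variables with all relevant
differential entropies existing and finite, then
`h(X+Y+Z+W) + h(Y) + h(Z) ≤ h(X+Y) + h(Y+Z) + h(Z+W)`. -/
theorem diffEntropy_four_sum_ineq
    {Ω : Type*} [MeasurableSpace Ω] (P : Measure Ω) [IsProbabilityMeasure P]
    (X Y Z W : Ω → ℝ) (hX : Measurable X) (hY : Measurable Y) (hZ : Measurable Z)
    (hW : Measurable W)
    (hindep : iIndepFun ![X, Y, Z, W] P)
    (h1 : FiniteDent volume P (X + Y + Z + W))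
    (h2 : FiniteDent volume P Y) (h3 : FiniteDent volume P Z)
    (h4 : FiniteDent volume P (X + Y)) (h5 : FiniteDent volume P (Y + Z))
    (h6 : FiniteDent volume P (Z + W)) :
    dent volume P (X + Y + Z + W) + dent volume P Y + dent volume P Z ≤
      dent volume P (X + Y) + dent volume P (Y + Z) + dent volume P (Z + W) := by
  have hXYm : Measurable (X + Y) := hX.add hY
  have hYZm : Measurable (Y + Z) := hY.add hZ
  have hZWm : Measurable (Z + W) := hZ.add hW
  have hSm : Measurable (X + Y + Z + W) := ((hX.add hY).add hZ).add hW
  haveI iX : IsProbabilityMeasure (P.map X) := Measure.isProbabilityMeasure_map hX.aemeasurable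
  haveI iY : IsProbabilityMeasure (P.map Y) := Measure.isProbabilityMeasure_map hY.aemeasurable
  haveI iZ : IsProbabilityMeasure (P.map Z) := Measure.isProbabilityMeasure_map hZ.aemeasurable
  haveI iW : IsProbabilityMeasure (P.map W) := Measure.isProbabilityMeasure_map hW.aemeasurable
  haveI iXY : IsProbabilityMeasure (P.map (X + Y)) := Measure.isProbabilityMeasure_map hXYm.aemeasurable
  haveI iYZ : IsProbabilityMeasure (P.map (Y + Z)) := Measure.isProbabilityMeasure_map hYZm.aemeasurable
  haveI iZW : IsProbabilityMeasure (P.map (Z + W)) := Measure.isProbabilityMeasure_map hZWm.aemeasurable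
  haveI iS : IsProbabilityMeasure (P.map (X + Y + Z + W)) :=
    Measure.isProbabilityMeasure_map hSm.aemeasurable
  set fY := (P.map Y).rnDeriv volume with hfYdef
  set fZ := (P.map Z).rnDeriv volume with hfZdef
  set fXY := (P.map (X + Y)).rnDeriv volume with hfXYdef
  set fYZ := (P.map (Y + Z)).rnDeriv volume with hfYZdef
  set fZW := (P.map (Z + W)).rnDeriv volume with hfZWdef
  set fS := (P.map (X + Y + Z + W)).rnDeriv volume with hfSdef
  have hmfY : Measurable fY := Measure.measurable_rnDeriv _ _
  have hmfZ : Measurable fZ := Measure.measurable_rnDeriv _ _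
  have hmfXY : Measurable fXY := Measure.measurable_rnDeriv _ _
  have hmfYZ : Measurable fYZ := Measure.measurable_rnDeriv _ _
  have hmfZW : Measurable fZW := Measure.measurable_rnDeriv _ _
  have hmfS : Measurable fS := Measure.measurable_rnDeriv _ _
  have hfmeas : ∀ i, Measurable (![X, Y, Z, W] i) := by
    intro i; fin_cases i <;> assumption
  -- the convolution identity for the density of the total sum
  have hiUV : IndepFun (X + Y) (Z + W) P := by
    have h := hindep.indepFun_add_add hfmeas 0 1 2 3
      (by decide) (by decide) (by decide) (by decide)
    exact h
  have hmapUV : P.map (fun ω => ((X + Y) ω, (Z + W) ω))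
      = (P.map (X + Y)).prod (P.map (Z + W)) :=
    (indepFun_iff_map_prod_eq_prod_map_map hXYm.aemeasurable hZWm.aemeasurable).mp hiUV
  have hSmap : P.map (X + Y + Z + W)
      = ((P.map (X + Y)).prod (P.map (Z + W))).map (fun p : ℝ × ℝ => p.1 + p.2) := by
    rw [← hmapUV, Measure.map_map measurable_add (hXYm.prodMk hZWm)]
    congr 1
    funext ω
    simp only [Function.comp_apply, Pi.add_apply]
    ring
  have hconv : ∀ᵐ s ∂(volume : Measure ℝ), (∫⁻ a, fXY a * fZW (s - a) ∂volume) ≤ fS s := by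
    have h := conv_rnDeriv (P.map (X + Y)) (P.map (Z + W)) h4.1 h6.1
    rw [← hSmap] at h
    filter_upwards [h] with s hs
    exact le_of_eq hs
  -- the product structure of the joint law
  have e2 : ![X, Y, Z, W] 2 = Z := rfl
  have e3 : ![X, Y, Z, W] 3 = W := rfl
  have hmapZW : P.map (fun ω => (Z ω, W ω)) = (P.map Z).prod (P.map W) := by
    have h23 : IndepFun Z W P := by
      have h := hindep.indepFun (show (2 : Fin 4) ≠ 3 by decide)
      rwa [e2, e3] at h
    exact (indepFun_iff_map_prod_eq_prod_map_map hZ.aemeasurable hW.aemeasurable).mp h23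
  have hmapYZW : P.map (fun ω => (Y ω, (Z ω, W ω)))
      = (P.map Y).prod ((P.map Z).prod (P.map W)) := by
    have hiY : IndepFun Y (fun ω => (Z ω, W ω)) P := by
      have h := (hindep.indepFun_prodMk hfmeas 2 3 1 (by decide) (by decide)).symm
      rwa [e2, e3, show ![X, Y, Z, W] 1 = Y from rfl] at h
    rw [(indepFun_iff_map_prod_eq_prod_map_map hY.aemeasurable
      (hZ.prodMk hW).aemeasurable).mp hiY, hmapZW]
  have hiX : IndepFun X (fun ω => (Y ω, (Z ω, W ω))) P := by
    have h01 : (0 : Fin 4) ∈ ({0} : Finset (Fin 4)) := by decide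
    have h11 : (1 : Fin 4) ∈ ({1, 2, 3} : Finset (Fin 4)) := by decide
    have h12 : (2 : Fin 4) ∈ ({1, 2, 3} : Finset (Fin 4)) := by decide
    have h13 : (3 : Fin 4) ∈ ({1, 2, 3} : Finset (Fin 4)) := by decide
    have hfin := hindep.indepFun_finset {0} {1, 2, 3} (by decide) hfmeas
    have hcomp := hfin.comp
      (φ := fun v : ({0} : Finset (Fin 4)) → ℝ => v ⟨0, h01⟩)
      (ψ := fun v : ({1, 2, 3} : Finset (Fin 4)) → ℝ =>
        (v ⟨1, h11⟩, (v ⟨2, h12⟩, v ⟨3, h13⟩)))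
      ((measurable_pi_apply _) :
        Measurable fun v : ({0} : Finset (Fin 4)) → ℝ => v ⟨0, h01⟩)
      (((measurable_pi_apply _).prodMk
        ((measurable_pi_apply _).prodMk (measurable_pi_apply _))) :
        Measurable fun v : ({1, 2, 3} : Finset (Fin 4)) → ℝ =>
          (v ⟨1, h11⟩, (v ⟨2, h12⟩, v ⟨3, h13⟩)))
    exact hcomp
  have hmapT : P.map (fun ω => (X ω, (Y ω, (Z ω, W ω))))
      = (P.map X).prod ((P.map Y).prod ((P.map Z).prod (P.map W))) := by
    rw [(indepFun_iff_map_prod_eq_prod_map_map hX.aemeasurable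
      (hY.prodMk (hZ.prodMk hW)).aemeasurable).mp hiX, hmapYZW]
  -- the key quantity
  set R : Ω → ℝ≥0∞ := fun ω =>
    (fXY (X ω + Y ω) * (fYZ (Y ω + Z ω) * fZW (Z ω + W ω))) /
      (fS (X ω + Y ω + Z ω + W ω) * (fY (Y ω) * fZ (Z ω))) with hRdef
  have hRmeas : Measurable R := by fun_prop
  have hkey : (∫⁻ ω, R ω ∂P) ≤ 1 := by
    set Dfun : ℝ × (ℝ × (ℝ × ℝ)) → ℝ≥0∞ := fun p =>
      (fXY (p.1 + p.2.1) * (fYZ (p.2.1 + p.2.2.1) * fZW (p.2.2.1 + p.2.2.2))) /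
        (fS (p.1 + p.2.1 + p.2.2.1 + p.2.2.2) * (fY p.2.1 * fZ p.2.2.1)) with hDdef
    have hD : Measurable Dfun := by fun_prop
    have hT : Measurable (fun ω => (X ω, (Y ω, (Z ω, W ω)))) :=
      hX.prodMk (hY.prodMk (hZ.prodMk hW))
    calc (∫⁻ ω, R ω ∂P)
        = ∫⁻ p, Dfun p ∂((P.map X).prod ((P.map Y).prod ((P.map Z).prod (P.map W)))) := by
          rw [← hmapT, lintegral_map hD hT]
      _ = ∫⁻ x, ∫⁻ y, ∫⁻ z, ∫⁻ w, Dfun (x, (y, (z, w)))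
            ∂(P.map W) ∂(P.map Z) ∂(P.map Y) ∂(P.map X) := by
          rw [lintegral_prod _ hD.aemeasurable]
          refine lintegral_congr fun x => ?_
          rw [lintegral_prod (fun q => Dfun (x, q))
            ((hD.comp measurable_prodMk_left).aemeasurable)]
          refine lintegral_congr fun y => ?_
          rw [lintegral_prod (fun q => Dfun (x, (y, q)))
            ((hD.comp
              ((measurable_prodMk_left (x := x)).comp measurable_prodMk_left)).aemeasurable)]
      _ = ∫⁻ x, ∫⁻ y, ∫⁻ z, ∫⁻ w,
            (fXY (x + y) * (fYZ (y + z) * fZW (z + w))) /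
              (fS (x + y + z + w) * (fY y * fZ z))
            ∂(P.map W) ∂(P.map Z) ∂(P.map Y) ∂(P.map X) := rfl
      _ ≤ 1 := by
          refine keyB (P.map X) (P.map Y) (P.map Z) (P.map W) fY fZ fXY fYZ fZW fS
            hmfY hmfZ hmfXY hmfYZ hmfZW hmfS
            (Measure.withDensity_rnDeriv_eq _ _ h2.1).symm
            (Measure.withDensity_rnDeriv_eq _ _ h3.1).symm
            (le_of_eq ?_) hconv
          rw [Measure.lintegral_rnDeriv h5.1]
          exact measure_univ
  -- a.e. positivity and finiteness of the densities along the trajectories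
  have dens_facts : ∀ (V : Ω → ℝ), Measurable V → (P.map V ≪ volume) →
      ∀ᵐ ω ∂P, 0 < (P.map V).rnDeriv volume (V ω) ∧ (P.map V).rnDeriv volume (V ω) < ∞ := by
    intro V hV hac
    have hpos := Measure.rnDeriv_pos hac
    have hlt : ∀ᵐ x ∂(P.map V), (P.map V).rnDeriv volume x < ∞ :=
      (Measure.rnDeriv_lt_top (P.map V) volume).filter_mono hac.ae_le
    exact ae_of_ae_map hV.aemeasurable (hpos.and hlt)
  have hfacS := dens_facts _ hSm h1.1
  have hfacY := dens_facts _ hY h2.1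
  have hfacZ := dens_facts _ hZ h3.1
  have hfacXY := dens_facts _ hXYm h4.1
  have hfacYZ := dens_facts _ hYZm h5.1
  have hfacZW := dens_facts _ hZWm h6.1
  -- transfer the six integrals to Ω
  have hmlog : ∀ (ν : Measure ℝ),
      AEStronglyMeasurable (fun x => Real.log ((ν.rnDeriv volume x)).toReal) (P.map (X + Y)) := by
    intro ν
    exact (Real.measurable_log.comp (Measure.measurable_rnDeriv ν volume).ennreal_toReal
      ).aestronglyMeasurable
  have hstrong : ∀ (f : ℝ → ℝ≥0∞) (ν : Measure ℝ), Measurable f →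
      AEStronglyMeasurable (fun x => Real.log (f x).toReal) ν := by
    intro f ν hf
    exact (Real.measurable_log.comp hf.ennreal_toReal).aestronglyMeasurable
  have EXY : (∫ x, Real.log (fXY x).toReal ∂(P.map (X + Y)))
      = ∫ ω, Real.log (fXY ((X + Y) ω)).toReal ∂P :=
    integral_map hXYm.aemeasurable (hstrong _ _ hmfXY)
  have EYZ : (∫ x, Real.log (fYZ x).toReal ∂(P.map (Y + Z)))
      = ∫ ω, Real.log (fYZ ((Y + Z) ω)).toReal ∂P :=
    integral_map hYZm.aemeasurable (hstrong _ _ hmfYZ)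
  have EZW : (∫ x, Real.log (fZW x).toReal ∂(P.map (Z + W)))
      = ∫ ω, Real.log (fZW ((Z + W) ω)).toReal ∂P :=
    integral_map hZWm.aemeasurable (hstrong _ _ hmfZW)
  have ES : (∫ x, Real.log (fS x).toReal ∂(P.map (X + Y + Z + W)))
      = ∫ ω, Real.log (fS ((X + Y + Z + W) ω)).toReal ∂P :=
    integral_map hSm.aemeasurable (hstrong _ _ hmfS)
  have EY : (∫ x, Real.log (fY x).toReal ∂(P.map Y))
      = ∫ ω, Real.log (fY (Y ω)).toReal ∂P :=
    integral_map hY.aemeasurable (hstrong _ _ hmfY)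
  have EZ : (∫ x, Real.log (fZ x).toReal ∂(P.map Z))
      = ∫ ω, Real.log (fZ (Z ω)).toReal ∂P :=
    integral_map hZ.aemeasurable (hstrong _ _ hmfZ)
  -- integrability on Ω
  have LXY : Integrable (fun ω => Real.log (fXY ((X + Y) ω)).toReal) P :=
    (integrable_map_measure (hstrong _ _ hmfXY) hXYm.aemeasurable).mp h4.2
  have LYZ : Integrable (fun ω => Real.log (fYZ ((Y + Z) ω)).toReal) P :=
    (integrable_map_measure (hstrong _ _ hmfYZ) hYZm.aemeasurable).mp h5.2
  have LZW : Integrable (fun ω => Real.log (fZW ((Z + W) ω)).toReal) P :=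
    (integrable_map_measure (hstrong _ _ hmfZW) hZWm.aemeasurable).mp h6.2
  have LS : Integrable (fun ω => Real.log (fS ((X + Y + Z + W) ω)).toReal) P :=
    (integrable_map_measure (hstrong _ _ hmfS) hSm.aemeasurable).mp h1.2
  have LY : Integrable (fun ω => Real.log (fY (Y ω)).toReal) P :=
    (integrable_map_measure (hstrong _ _ hmfY) hY.aemeasurable).mp h2.2
  have LZ : Integrable (fun ω => Real.log (fZ (Z ω)).toReal) P :=
    (integrable_map_measure (hstrong _ _ hmfZ) hZ.aemeasurable).mp h3.2
  -- the sum of the log terms agrees a.e. with log of R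
  have hae_log : (fun ω => Real.log (fXY ((X + Y) ω)).toReal
        + Real.log (fYZ ((Y + Z) ω)).toReal + Real.log (fZW ((Z + W) ω)).toReal
        - Real.log (fS ((X + Y + Z + W) ω)).toReal - Real.log (fY (Y ω)).toReal
        - Real.log (fZ (Z ω)).toReal)
      =ᵐ[P] fun ω => Real.log (R ω).toReal := by
    filter_upwards [hfacS, hfacY, hfacZ, hfacXY, hfacYZ, hfacZW]
      with ω hS' hY' hZ' hXY' hYZ' hZW'
    have pXY : 0 < (fXY (X ω + Y ω)).toReal := ENNReal.toReal_pos hXY'.1.ne' hXY'.2.ne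
    have pYZ : 0 < (fYZ (Y ω + Z ω)).toReal := ENNReal.toReal_pos hYZ'.1.ne' hYZ'.2.ne
    have pZW : 0 < (fZW (Z ω + W ω)).toReal := ENNReal.toReal_pos hZW'.1.ne' hZW'.2.ne
    have pS : 0 < (fS (X ω + Y ω + Z ω + W ω)).toReal := ENNReal.toReal_pos hS'.1.ne' hS'.2.ne
    have pY : 0 < (fY (Y ω)).toReal := ENNReal.toReal_pos hY'.1.ne' hY'.2.ne
    have pZ : 0 < (fZ (Z ω)).toReal := ENNReal.toReal_pos hZ'.1.ne' hZ'.2.ne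
    simp only [hRdef, Pi.add_apply]
    rw [ENNReal.toReal_div, ENNReal.toReal_mul, ENNReal.toReal_mul, ENNReal.toReal_mul,
      ENNReal.toReal_mul,
      Real.log_div (by positivity) (by positivity),
      Real.log_mul pXY.ne' (by positivity), Real.log_mul pYZ.ne' pZW.ne',
      Real.log_mul pS.ne' (by positivity), Real.log_mul pY.ne' pZ.ne']
    ring
  -- conclude
  have hRlt : ∀ᵐ ω ∂P, R ω < ∞ := by
    filter_upwards [hfacS, hfacY, hfacZ, hfacXY, hfacYZ, hfacZW]
      with ω hS' hY' hZ' hXY' hYZ' hZW'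
    refine ENNReal.div_lt_top ?_ ?_
    · exact ENNReal.mul_ne_top hXY'.2.ne (ENNReal.mul_ne_top hYZ'.2.ne hZW'.2.ne)
    · exact mul_ne_zero hS'.1.ne' (mul_ne_zero hY'.1.ne' hZ'.1.ne')
  have hRpos : ∀ᵐ ω ∂P, 0 < (R ω).toReal := by
    filter_upwards [hfacS, hfacY, hfacZ, hfacXY, hfacYZ, hfacZW, hRlt]
      with ω hS' hY' hZ' hXY' hYZ' hZW' hlt
    refine ENNReal.toReal_pos ?_ hlt.ne
    refine (ENNReal.div_pos ?_ ?_).ne'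
    · exact mul_ne_zero hXY'.1.ne' (mul_ne_zero hYZ'.1.ne' hZW'.1.ne')
    · exact ENNReal.mul_ne_top hS'.2.ne (ENNReal.mul_ne_top hY'.2.ne hZ'.2.ne)
  have hint_r : Integrable (fun ω => (R ω).toReal) P :=
    integrable_toReal_of_lintegral_ne_top hRmeas.aemeasurable
      (hkey.trans_lt ENNReal.one_lt_top).ne
  have hIR : (∫ ω, (R ω).toReal ∂P) ≤ 1 := by
    rw [integral_toReal hRmeas.aemeasurable hRlt]
    have h := ENNReal.toReal_mono ENNReal.one_ne_top hkey
    simpa using h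
  have hlog_int : Integrable (fun ω => Real.log (R ω).toReal) P :=
    ((((LXY.add LYZ).add LZW).sub LS).sub LY).sub LZ |>.congr hae_log
  have key2 : (∫ ω, Real.log (R ω).toReal ∂P) ≤ 0 := by
    have hmono : (∫ ω, Real.log (R ω).toReal ∂P) ≤ ∫ ω, ((R ω).toReal - 1) ∂P := by
      refine integral_mono_ae hlog_int (hint_r.sub (integrable_const 1)) ?_
      filter_upwards [hRpos] with ω hp
      exact Real.log_le_sub_one_of_pos hp
    have hsub : (∫ ω, ((R ω).toReal - 1) ∂P) = (∫ ω, (R ω).toReal ∂P) - 1 := by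
      rw [integral_sub hint_r (integrable_const 1), integral_const]
      simp
    linarith
  have hsum : (∫ ω, (Real.log (fXY ((X + Y) ω)).toReal
        + Real.log (fYZ ((Y + Z) ω)).toReal + Real.log (fZW ((Z + W) ω)).toReal
        - Real.log (fS ((X + Y + Z + W) ω)).toReal - Real.log (fY (Y ω)).toReal
        - Real.log (fZ (Z ω)).toReal) ∂P) ≤ 0 := by
    rw [integral_congr_ae hae_log]
    exact key2
  have I2 : Integrable (fun ω => Real.log (fXY ((X + Y) ω)).toReal
      + Real.log (fYZ ((Y + Z) ω)).toReal) P := by exact LXY.add LYZ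
  have I3 : Integrable (fun ω => Real.log (fXY ((X + Y) ω)).toReal
      + Real.log (fYZ ((Y + Z) ω)).toReal + Real.log (fZW ((Z + W) ω)).toReal) P := by
    exact I2.add LZW
  have I4 : Integrable (fun ω => Real.log (fXY ((X + Y) ω)).toReal
      + Real.log (fYZ ((Y + Z) ω)).toReal + Real.log (fZW ((Z + W) ω)).toReal
      - Real.log (fS ((X + Y + Z + W) ω)).toReal) P := by exact I3.sub LS
  have I5 : Integrable (fun ω => Real.log (fXY ((X + Y) ω)).toReal
      + Real.log (fYZ ((Y + Z) ω)).toReal + Real.log (fZW ((Z + W) ω)).toReal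
      - Real.log (fS ((X + Y + Z + W) ω)).toReal - Real.log (fY (Y ω)).toReal) P := by
    exact I4.sub LY
  rw [integral_sub I5 LZ, integral_sub I4 LY, integral_sub I3 LS, integral_add I2 LZW,
    integral_add LXY LYZ] at hsum
  simp only [dent]
  rw [ES, EY, EZ, EXY, EYZ, EZW]
  linarith
end

section
/- Ruzsa covering lemma for Shannon entropy: Suppose X, Y are independent discrete random variables taking values in a discrete abelian group with finite Shannon entropies, and let (X1,Y1), (X2,Y2) be versions of (X,Y) that are conditionally independent given X+Y (i.e., each pair has the same joint distribution as (X,Y), each satisfies Xi + Yi = X1 + Y1, and the two pairs are conditionally independent given this common sum). Then H(X1, X2, Y1 | Y2) = 2H(X) + H(Y) - H(X+Y), where H denotes discrete Shannon entropy and H(·|·) conditional Shannon entropy. -/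
open MeasureTheory ProbabilityTheory

/-- The Shannon entropy of a discrete random variable `X`:
`H(X) = ∑ₓ P(X = x) log (1 / P(X = x))`. -/
noncomputable def sent {Ω S : Type*} [MeasurableSpace Ω] [MeasurableSpace S]
    (P : Measure Ω) (X : Ω → S) : ℝ :=
  ∑' s : S, Real.negMulLog ((P.map X) {s}).toReal

/-- The Shannon entropy of `X` is well defined and finite: the series defining it
converges (absolutely). -/
def FiniteSent {Ω S : Type*} [MeasurableSpace Ω] [MeasurableSpace S]
    (P : Measure Ω) (X : Ω → S) : Prop :=
  Summable (fun s : S => Real.negMulLog ((P.map X) {s}).toReal)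

/-- The conditional Shannon entropy `H(U|V) = H(U,V) - H(V)`. -/
noncomputable def condSent {Ω S T : Type*} [MeasurableSpace Ω] [MeasurableSpace S]
    [MeasurableSpace T] (P : Measure Ω) (U : Ω → S) (V : Ω → T) : ℝ :=
  sent P (fun ω => (U ω, V ω)) - sent P V

section Aux

open scoped ENNReal

noncomputable def phiE (r : ℝ≥0∞) : ℝ≥0∞ := ENNReal.ofReal (Real.negMulLog r.toReal)

noncomputable def nlogE (r : ℝ≥0∞) : ℝ≥0∞ := ENNReal.ofReal (- Real.log r.toReal)

@[simp] lemma phiE_zero : phiE 0 = 0 := by simp [phiE]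

lemma mul_nlogE {r : ℝ≥0∞} (hr : r ≤ 1) : r * nlogE r = phiE r := by
  have hrt : r ≠ ⊤ := (hr.trans_lt ENNReal.one_lt_top).ne
  rw [phiE, nlogE, Real.negMulLog, neg_mul_comm, ENNReal.ofReal_mul ENNReal.toReal_nonneg,
    ENNReal.ofReal_toReal hrt]

lemma toReal_le_one' {r : ℝ≥0∞} (hr : r ≤ 1) : r.toReal ≤ 1 := by
  simpa using ENNReal.toReal_mono ENNReal.one_ne_top hr

lemma comap_const_on_fiber {Ω G : Type*} [MeasurableSpace G] {W : Ω → G}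
    {h : Ω → ℝ} (hh : Measurable[MeasurableSpace.comap W inferInstance] h)
    {ω ω' : Ω} (hww : W ω = W ω') : h ω = h ω' := by
  obtain ⟨t, _, h2⟩ := hh (measurableSet_singleton (h ω))
  have hω : ω ∈ W ⁻¹' t := by rw [h2]; exact rfl
  have hω' : ω' ∈ W ⁻¹' t := by simpa [Set.mem_preimage, ← hww] using hω
  rw [h2] at hω'
  exact hω'.symm

lemma cond_prod_meas {Ω G : Type*} [mΩ : MeasurableSpace Ω] [StandardBorelSpace Ω]
    [MeasurableSpace G] [MeasurableSingletonClass G]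
    (μ : Measure Ω) [IsProbabilityMeasure μ] {W : Ω → G} (hW : Measurable W)
    {A B : Set Ω} (hA : MeasurableSet A) (hB : MeasurableSet B)
    (h : (μ⟦A ∩ B | MeasurableSpace.comap W inferInstance⟧) =ᵐ[μ]
      fun ω => (μ⟦A | MeasurableSpace.comap W inferInstance⟧) ω *
        (μ⟦B | MeasurableSpace.comap W inferInstance⟧) ω)
    {w : G} (hAw : A ⊆ W ⁻¹' {w}) (hBw : B ⊆ W ⁻¹' {w}) :
    μ (A ∩ B) * μ (W ⁻¹' {w}) = μ A * μ B := by
  have hm : MeasurableSpace.comap W inferInstance ≤ mΩ := hW.comap_le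
  set s := W ⁻¹' {w} with hs_def
  have hs_m : MeasurableSet[MeasurableSpace.comap W inferInstance] s :=
    ⟨{w}, measurableSet_singleton w, rfl⟩
  have hs : MeasurableSet s := hW (measurableSet_singleton w)
  by_cases hs0 : μ s = 0
  · have hA0 : μ A = 0 := le_antisymm (hs0 ▸ measure_mono hAw) (zero_le)
    have hAB0 : μ (A ∩ B) = 0 :=
      le_antisymm (hA0 ▸ measure_mono Set.inter_subset_left) (zero_le)
    simp [hAB0, hA0]
  · have hsne : s.Nonempty := Set.nonempty_iff_ne_empty.2 (fun he => hs0 (he ▸ measure_empty))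
    obtain ⟨ω₀, hω₀⟩ := hsne
    have key : ∀ C : Set Ω, MeasurableSet C →
        ∫ x in s, (μ⟦C | MeasurableSpace.comap W inferInstance⟧) x ∂μ
          = (μ (C ∩ s)).toReal := by
      intro C hC
      rw [setIntegral_condExp hm ((integrable_const (1 : ℝ)).indicator hC) hs_m]
      rw [setIntegral_indicator hC]
      simp [Set.inter_comm]
      rfl
    have hconst : ∀ C : Set Ω, Set.EqOn (μ⟦C | MeasurableSpace.comap W inferInstance⟧)
        (fun _ => (μ⟦C | MeasurableSpace.comap W inferInstance⟧) ω₀) s := by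
      intro C ω hω
      exact comap_const_on_fiber (stronglyMeasurable_condExp.measurable)
        (by rw [hω, hω₀])
    have hval : ∀ C : Set Ω, MeasurableSet C →
        (μ (C ∩ s)).toReal
          = (μ s).toReal * (μ⟦C | MeasurableSpace.comap W inferInstance⟧) ω₀ := by
      intro C hC
      rw [← key C hC, setIntegral_congr_fun hs (hconst C), setIntegral_const, smul_eq_mul]
      rfl
    set vA := (μ⟦A | MeasurableSpace.comap W inferInstance⟧) ω₀ with hvA
    set vB := (μ⟦B | MeasurableSpace.comap W inferInstance⟧) ω₀ with hvB
    have hA' : (μ A).toReal = (μ s).toReal * vA := by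
      have := hval A hA
      rwa [Set.inter_eq_self_of_subset_left hAw] at this
    have hB' : (μ B).toReal = (μ s).toReal * vB := by
      have := hval B hB
      rwa [Set.inter_eq_self_of_subset_left hBw] at this
    have hABs : A ∩ B ∩ s = A ∩ B := Set.inter_eq_self_of_subset_left
      ((Set.inter_subset_left).trans hAw)
    have hAB' : (μ (A ∩ B)).toReal = (μ s).toReal * (vA * vB) := by
      have h1 : ∫ x in s, (μ⟦A ∩ B | MeasurableSpace.comap W inferInstance⟧) x ∂μ
          = ∫ x in s, ((μ⟦A | MeasurableSpace.comap W inferInstance⟧) x *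
              (μ⟦B | MeasurableSpace.comap W inferInstance⟧) x) ∂μ :=
        setIntegral_congr_ae hs (h.mono fun x hx _ => hx)
      have h2 : ∫ x in s, ((μ⟦A | MeasurableSpace.comap W inferInstance⟧) x *
              (μ⟦B | MeasurableSpace.comap W inferInstance⟧) x) ∂μ
          = (μ s).toReal * (vA * vB) := by
        rw [setIntegral_congr_fun hs (fun x hx => by
          rw [hconst A hx, hconst B hx]), setIntegral_const, smul_eq_mul]
        rfl
      have h3 := key (A ∩ B) (hA.inter hB)
      rw [hABs] at h3
      rw [← h3, h1, h2]
    have hfin : ∀ C : Set Ω, μ C ≠ ⊤ := fun C => measure_ne_top μ C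
    apply (ENNReal.toReal_eq_toReal_iff' (ENNReal.mul_ne_top (hfin _) (hfin _))
      (ENNReal.mul_ne_top (hfin _) (hfin _))).1
    rw [ENNReal.toReal_mul, ENNReal.toReal_mul, hA', hB', hAB']
    ring

/-- entropy of a product distribution. -/
lemma prod_entropy_sum {G H : Type*} (a : G → ℝ≥0∞) (b : H → ℝ≥0∞)
    (ha1 : ∀ x, a x ≤ 1) (hb1 : ∀ y, b y ≤ 1)
    (hsa : ∑' x, a x = 1) (hsb : ∑' y, b y = 1) :
    ∑' z : G × H, phiE (a z.1 * b z.2) = (∑' x, phiE (a x)) + ∑' y, phiE (b y) := by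
  have hat : ∀ x, a x ≠ ⊤ := fun x => ((ha1 x).trans_lt ENNReal.one_lt_top).ne
  have hbt : ∀ y, b y ≠ ⊤ := fun y => ((hb1 y).trans_lt ENNReal.one_lt_top).ne
  have key : ∀ (x : G) (y : H),
      phiE (a x * b y) = b y * phiE (a x) + a x * phiE (b y) := by
    intro x y
    have h1 : 0 ≤ (b y).toReal * Real.negMulLog (a x).toReal := mul_nonneg
      ENNReal.toReal_nonneg
      (Real.negMulLog_nonneg ENNReal.toReal_nonneg (toReal_le_one' (ha1 x)))
    have h2 : 0 ≤ (a x).toReal * Real.negMulLog (b y).toReal := mul_nonneg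
      ENNReal.toReal_nonneg
      (Real.negMulLog_nonneg ENNReal.toReal_nonneg (toReal_le_one' (hb1 y)))
    rw [phiE, phiE, phiE, ENNReal.toReal_mul, Real.negMulLog_mul, ENNReal.ofReal_add h1 h2,
      ENNReal.ofReal_mul ENNReal.toReal_nonneg, ENNReal.ofReal_mul ENNReal.toReal_nonneg,
      ENNReal.ofReal_toReal (hbt y), ENNReal.ofReal_toReal (hat x)]
  calc ∑' z : G × H, phiE (a z.1 * b z.2)
      = ∑' x, ∑' y, (b y * phiE (a x) + a x * phiE (b y)) := by
        rw [ENNReal.tsum_prod']; exact tsum_congr fun x => tsum_congr fun y => key x y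
    _ = ∑' x, ((∑' y, b y) * phiE (a x) + a x * ∑' y, phiE (b y)) := by
        refine tsum_congr fun x => ?_
        rw [ENNReal.tsum_add, ENNReal.tsum_mul_right, ENNReal.tsum_mul_left]
    _ = (∑' x, phiE (a x)) + ∑' y, phiE (b y) := by
        simp only [hsb, one_mul]
        rw [ENNReal.tsum_add, ENNReal.tsum_mul_right, hsa, one_mul]

lemma master_sum {G : Type*} [AddCommGroup G] [DecidableEq G]
    (p : G → G → ℝ≥0∞) (q : G → ℝ≥0∞)
    (κ : (G × G × G) × G → ℝ≥0∞)
    (hq : ∀ w, ∑' x, p x (w - x) = q w)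
    (hp1 : ∀ x y, p x y ≤ 1) (hq1 : ∀ w, q w ≤ 1)
    (hκ : ∀ x₁ x₂ y₁ y₂, κ ((x₁, x₂, y₁), y₂)
      = if x₂ + y₂ = x₁ + y₁ then p x₁ y₁ * p x₂ y₂ / q (x₁ + y₁) else 0) :
    (∑' t, phiE (κ t)) + ∑' w, phiE (q w)
      = (∑' z : G × G, phiE (p z.1 z.2)) + ∑' z : G × G, phiE (p z.1 z.2) := by
  have hqt : ∀ w, q w ≠ ⊤ := fun w => ((hq1 w).trans_lt ENNReal.one_lt_top).ne
  have hpt : ∀ x y, p x y ≠ ⊤ := fun x y => ((hp1 x y).trans_lt ENNReal.one_lt_top).ne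
  have hple : ∀ x y, p x y ≤ q (x + y) := by
    intro x y
    calc p x y = p x (x + y - x) := by rw [add_sub_cancel_left]
      _ ≤ ∑' x', p x' (x + y - x') := ENNReal.le_tsum x
      _ = q (x + y) := hq _
  have hred : ∀ f : (G × G × G) × G → ℝ≥0∞,
      ∑' t, κ t * f t
        = ∑' x₁, ∑' x₂, ∑' y₁, (p x₁ y₁ * p x₂ (x₁ + y₁ - x₂) / q (x₁ + y₁)) *
            f ((x₁, x₂, y₁), x₁ + y₁ - x₂) := by
    intro f
    rw [ENNReal.tsum_prod', ENNReal.tsum_prod']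
    refine tsum_congr fun x₁ => ?_
    rw [ENNReal.tsum_prod']
    refine tsum_congr fun x₂ => tsum_congr fun y₁ => ?_
    rw [tsum_eq_single (x₁ + y₁ - x₂) ?_]
    · rw [hκ, if_pos (by abel)]
    · intro y₂ hy₂
      rw [hκ, if_neg, zero_mul]
      intro hc
      exact hy₂ (eq_sub_of_add_eq' hc)
  have hcancel : ∀ w (C : ℝ≥0∞), (q w = 0 → C = 0) → q w * (C / q w) = C := by
    intro w C h0
    by_cases hw : q w = 0
    · simp [hw, h0 hw]
    · exact ENNReal.mul_div_cancel hw (hqt w)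
  have hS1 : ∑' t : (G × G × G) × G, κ t * nlogE (p t.1.1 t.1.2.2)
      = ∑' z : G × G, phiE (p z.1 z.2) := by
    rw [hred]
    rw [ENNReal.tsum_prod']
    refine tsum_congr fun x₁ => ?_
    rw [ENNReal.tsum_comm]
    refine tsum_congr fun y₁ => ?_
    calc ∑' x₂, (p x₁ y₁ * p x₂ (x₁ + y₁ - x₂) / q (x₁ + y₁)) * nlogE (p x₁ y₁)
        = ∑' x₂, p x₂ (x₁ + y₁ - x₂) *
            ((p x₁ y₁ * nlogE (p x₁ y₁)) / q (x₁ + y₁)) := by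
          refine tsum_congr fun x₂ => ?_
          rw [div_eq_mul_inv, div_eq_mul_inv]; ring
      _ = q (x₁ + y₁) * ((p x₁ y₁ * nlogE (p x₁ y₁)) / q (x₁ + y₁)) := by
          rw [ENNReal.tsum_mul_right, hq]
      _ = phiE (p x₁ y₁) := by
          rw [hcancel _ _ (fun h0 => by
            have : p x₁ y₁ = 0 := le_antisymm (h0 ▸ hple x₁ y₁) (zero_le)
            simp [this]), mul_nlogE (hp1 _ _)]
  have hS2 : ∑' t : (G × G × G) × G, κ t * nlogE (p t.1.2.1 t.2)
      = ∑' z : G × G, phiE (p z.1 z.2) := by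
    rw [hred, ENNReal.tsum_comm]
    rw [ENNReal.tsum_prod']
    refine tsum_congr fun x₂ => ?_
    have step1 : ∀ x₁, ∑' y₁, (p x₁ y₁ * p x₂ (x₁ + y₁ - x₂) / q (x₁ + y₁)) *
        nlogE (p x₂ (x₁ + y₁ - x₂))
        = ∑' u, (p x₁ (u - x₁) * p x₂ (u - x₂) / q u) * nlogE (p x₂ (u - x₂)) := by
      intro x₁
      rw [← (Equiv.addLeft x₁).tsum_eq
        (fun u => (p x₁ (u - x₁) * p x₂ (u - x₂) / q u) * nlogE (p x₂ (u - x₂)))]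
      refine tsum_congr fun y₁ => ?_
      simp [add_sub_cancel_left]
    calc ∑' x₁, ∑' y₁, (p x₁ y₁ * p x₂ (x₁ + y₁ - x₂) / q (x₁ + y₁)) *
          nlogE (p x₂ (x₁ + y₁ - x₂))
        = ∑' x₁, ∑' u, (p x₁ (u - x₁) * p x₂ (u - x₂) / q u) * nlogE (p x₂ (u - x₂)) :=
          tsum_congr step1
      _ = ∑' u, ∑' x₁, p x₁ (u - x₁) *
            ((p x₂ (u - x₂) * nlogE (p x₂ (u - x₂))) / q u) := by
          rw [ENNReal.tsum_comm]
          refine tsum_congr fun u => tsum_congr fun x₁ => ?_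
          rw [div_eq_mul_inv, div_eq_mul_inv]; ring
      _ = ∑' u, q u * ((p x₂ (u - x₂) * nlogE (p x₂ (u - x₂))) / q u) := by
          refine tsum_congr fun u => ?_
          rw [ENNReal.tsum_mul_right, hq]
      _ = ∑' u, phiE (p x₂ (u - x₂)) := by
          refine tsum_congr fun u => ?_
          rw [hcancel _ _ (fun h0 => by
            have hle : p x₂ (u - x₂) ≤ q u := by
              have := hple x₂ (u - x₂)
              rwa [add_sub_cancel] at this
            have : p x₂ (u - x₂) = 0 := le_antisymm (h0 ▸ hle) (zero_le)
            simp [this]), mul_nlogE (hp1 _ _)]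
      _ = ∑' y₂, phiE (p x₂ y₂) := by
          rw [← (Equiv.addLeft x₂).tsum_eq (fun u => phiE (p x₂ (u - x₂)))]
          refine tsum_congr fun y₂ => ?_
          simp [add_sub_cancel_left]
  have hSc : ∑' t : (G × G × G) × G, κ t * nlogE (q (t.1.1 + t.1.2.2))
      = ∑' w, phiE (q w) := by
    rw [hred]
    calc ∑' x₁, ∑' x₂, ∑' y₁, (p x₁ y₁ * p x₂ (x₁ + y₁ - x₂) / q (x₁ + y₁)) *
          nlogE (q (x₁ + y₁))
        = ∑' x₁, ∑' y₁, ∑' x₂, p x₂ (x₁ + y₁ - x₂) *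
            ((p x₁ y₁ * nlogE (q (x₁ + y₁))) / q (x₁ + y₁)) := by
          refine tsum_congr fun x₁ => ?_
          rw [ENNReal.tsum_comm]
          refine tsum_congr fun y₁ => tsum_congr fun x₂ => ?_
          rw [div_eq_mul_inv, div_eq_mul_inv]; ring
      _ = ∑' x₁, ∑' y₁, p x₁ y₁ * nlogE (q (x₁ + y₁)) := by
          refine tsum_congr fun x₁ => tsum_congr fun y₁ => ?_
          rw [ENNReal.tsum_mul_right, hq]
          exact hcancel _ _ (fun h0 => by
            have : p x₁ y₁ = 0 := le_antisymm (h0 ▸ hple x₁ y₁) (zero_le)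
            simp [this])
      _ = ∑' x₁, ∑' u, p x₁ (u - x₁) * nlogE (q u) := by
          refine tsum_congr fun x₁ => ?_
          rw [← (Equiv.addLeft x₁).tsum_eq (fun u => p x₁ (u - x₁) * nlogE (q u))]
          refine tsum_congr fun y₁ => ?_
          simp [add_sub_cancel_left]
      _ = ∑' u, q u * nlogE (q u) := by
          rw [ENNReal.tsum_comm]
          refine tsum_congr fun u => ?_
          rw [ENNReal.tsum_mul_right, hq]
      _ = ∑' w, phiE (q w) := tsum_congr fun w => mul_nlogE (hq1 w)
  have hpoint : ∀ t : (G × G × G) × G,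
      phiE (κ t) + κ t * nlogE (q (t.1.1 + t.1.2.2))
        = κ t * nlogE (p t.1.1 t.1.2.2) + κ t * nlogE (p t.1.2.1 t.2) := by
    rintro ⟨⟨x₁, x₂, y₁⟩, y₂⟩
    show phiE (κ ((x₁, x₂, y₁), y₂)) + κ ((x₁, x₂, y₁), y₂) * nlogE (q (x₁ + y₁))
      = κ ((x₁, x₂, y₁), y₂) * nlogE (p x₁ y₁) + κ ((x₁, x₂, y₁), y₂) * nlogE (p x₂ y₂)
    rw [hκ]
    split_ifs with hc
    · by_cases h1 : p x₁ y₁ = 0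
      · simp [h1]
      by_cases h2 : p x₂ y₂ = 0
      · simp [h2]
      have hq0 : q (x₁ + y₁) ≠ 0 := fun h => h1 (le_antisymm (h ▸ hple x₁ y₁) (zero_le))
      set a := (p x₁ y₁).toReal with ha_def
      set b := (p x₂ y₂).toReal with hb_def
      set c := (q (x₁ + y₁)).toReal with hc_def
      have ha0 : 0 < a := ENNReal.toReal_pos h1 (hpt _ _)
      have hb0 : 0 < b := ENNReal.toReal_pos h2 (hpt _ _)
      have hc0 : 0 < c := ENNReal.toReal_pos hq0 (hqt _)
      have ha1 : a ≤ 1 := toReal_le_one' (hp1 _ _)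
      have hb1 : b ≤ 1 := toReal_le_one' (hp1 _ _)
      have hc1 : c ≤ 1 := toReal_le_one' (hq1 _)
      have hac : a ≤ c := ENNReal.toReal_mono (hqt _) (hple x₁ y₁)
      set x : ℝ := a * b / c with hx_def
      have hx0 : 0 < x := by positivity
      have hx1 : x ≤ 1 := by
        rw [div_le_one hc0]
        calc a * b ≤ c * 1 := mul_le_mul hac hb1 hb0.le hc0.le
          _ = c := mul_one c
      have hκval : p x₁ y₁ * p x₂ y₂ / q (x₁ + y₁) = ENNReal.ofReal x := by
        rw [hx_def, ENNReal.ofReal_div_of_pos hc0, ENNReal.ofReal_mul ha0.le,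
          ha_def, hb_def, hc_def, ENNReal.ofReal_toReal (hpt _ _),
          ENNReal.ofReal_toReal (hpt _ _), ENNReal.ofReal_toReal (hqt _)]
      rw [hκval]
      have hlogx : Real.log x = Real.log a + Real.log b - Real.log c := by
        rw [hx_def, Real.log_div (by positivity) hc0.ne', Real.log_mul ha0.ne' hb0.ne']
      have hnn1 : 0 ≤ Real.negMulLog x := Real.negMulLog_nonneg hx0.le hx1
      have hnnc : 0 ≤ x * (-Real.log c) :=
        mul_nonneg hx0.le (neg_nonneg.2 (Real.log_nonpos hc0.le hc1))
      have hnna : 0 ≤ x * (-Real.log a) :=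
        mul_nonneg hx0.le (neg_nonneg.2 (Real.log_nonpos ha0.le ha1))
      have hnnb : 0 ≤ x * (-Real.log b) :=
        mul_nonneg hx0.le (neg_nonneg.2 (Real.log_nonpos hb0.le hb1))
      rw [phiE, nlogE, nlogE, nlogE, ENNReal.toReal_ofReal hx0.le,
        ← ENNReal.ofReal_mul hx0.le, ← ENNReal.ofReal_mul hx0.le,
        ← ENNReal.ofReal_mul hx0.le,
        ← ENNReal.ofReal_add hnn1 hnnc, ← ENNReal.ofReal_add hnna hnnb]
      congr 1
      rw [Real.negMulLog, hlogx]
      ring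
    · simp
  calc (∑' t, phiE (κ t)) + ∑' w, phiE (q w)
      = ∑' t : (G × G × G) × G,
          (phiE (κ t) + κ t * nlogE (q (t.1.1 + t.1.2.2))) := by
        rw [ENNReal.tsum_add, hSc]
    _ = ∑' t : (G × G × G) × G,
          (κ t * nlogE (p t.1.1 t.1.2.2) + κ t * nlogE (p t.1.2.1 t.2)) :=
        tsum_congr hpoint
    _ = _ := by rw [ENNReal.tsum_add, hS1, hS2]

lemma ofReal_sent {Ω S : Type*} [MeasurableSpace Ω] [MeasurableSpace S]
    {P : Measure Ω} {X : Ω → S} [IsProbabilityMeasure (P.map X)]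
    (hf : FiniteSent P X) :
    ENNReal.ofReal (sent P X) = ∑' s, phiE ((P.map X) {s}) :=
  ENNReal.ofReal_tsum_of_nonneg
    (fun s => Real.negMulLog_nonneg ENNReal.toReal_nonneg (toReal_le_one' prob_le_one)) hf

lemma sent_nonneg' {Ω S : Type*} [MeasurableSpace Ω] [MeasurableSpace S]
    {P : Measure Ω} {X : Ω → S} [IsProbabilityMeasure (P.map X)] :
    0 ≤ sent P X :=
  tsum_nonneg fun s => Real.negMulLog_nonneg ENNReal.toReal_nonneg (toReal_le_one' prob_le_one)

lemma tsum_singleton_meas {S : Type*} [MeasurableSpace S] [Countable S]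
    [MeasurableSingletonClass S] (ν : Measure S) [IsProbabilityMeasure ν] :
    ∑' s : S, ν {s} = 1 := by
  rw [← measure_univ (μ := ν), ← Set.iUnion_of_singleton S,
    measure_iUnion (fun i j hij => Set.disjoint_singleton.2 hij)
      (fun s => measurableSet_singleton s)]

end Aux

open scoped ENNReal

/-- **Ruzsa covering lemma for Shannon entropy.**
Suppose `X, Y` are independent discrete random variables taking values in a discrete
abelian group, with finite Shannon entropies, and `(X₁,Y₁)`, `(X₂,Y₂)` are versions of
`(X,Y)` that are conditionally independent given `X+Y` (each pair is distributed as
`(X,Y)`, the sums `Xᵢ + Yᵢ` agree, and the two pairs are conditionally independent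
given this common sum).  Then `H(X₁, X₂, Y₁ | Y₂) = 2H(X) + H(Y) - H(X+Y)`. -/
theorem ruzsa_covering_shannonEntropy
    {G : Type*} [AddCommGroup G] [Countable G]
    [MeasurableSpace G] [MeasurableSingletonClass G]
    {Ω₀ : Type*} [MeasurableSpace Ω₀] (P₀ : Measure Ω₀) [IsProbabilityMeasure P₀]
    {Ω : Type*} [MeasurableSpace Ω] [StandardBorelSpace Ω]
    (P : Measure Ω) [IsProbabilityMeasure P]
    (X Y : Ω₀ → G) (hX : Measurable X) (hY : Measurable Y) (hindep : IndepFun X Y P₀)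
    (X₁ Y₁ X₂ Y₂ : Ω → G)
    (hX₁ : Measurable X₁) (hY₁ : Measurable Y₁)
    (hX₂ : Measurable X₂) (hY₂ : Measurable Y₂)
    (hW : Measurable (fun ω => X₁ ω + Y₁ ω))
    (hsum : ∀ ω, X₂ ω + Y₂ ω = X₁ ω + Y₁ ω)
    (hid₁ : IdentDistrib (fun ω => (X₁ ω, Y₁ ω)) (fun ω => (X ω, Y ω)) P P₀)
    (hid₂ : IdentDistrib (fun ω => (X₂ ω, Y₂ ω)) (fun ω => (X ω, Y ω)) P P₀)
    (hci : CondIndepFun (MeasurableSpace.comap (fun ω => X₁ ω + Y₁ ω) inferInstance)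
      hW.comap_le (fun ω => (X₁ ω, Y₁ ω)) (fun ω => (X₂ ω, Y₂ ω)) P)
    (hfX : FiniteSent P₀ X) (hfY : FiniteSent P₀ Y)
    (hfXY : FiniteSent P₀ (X + Y))
    (hfJ : FiniteSent P (fun ω => ((X₁ ω, X₂ ω, Y₁ ω), Y₂ ω)))
    (hfY₂ : FiniteSent P Y₂) :
    condSent P (fun ω => (X₁ ω, X₂ ω, Y₁ ω)) Y₂ =
      2 * sent P₀ X + sent P₀ Y - sent P₀ (X + Y) := by
  classical
  have hXY : Measurable fun ω => (X ω, Y ω) := hX.prodMk hY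
  have hpair1 : Measurable fun ω => (X₁ ω, Y₁ ω) := hX₁.prodMk hY₁
  have hpair2 : Measurable fun ω => (X₂ ω, Y₂ ω) := hX₂.prodMk hY₂
  have hquad : Measurable fun ω => ((X₁ ω, X₂ ω, Y₁ ω), Y₂ ω) :=
    (hX₁.prodMk (hX₂.prodMk hY₁)).prodMk hY₂
  have hXaddY : Measurable (X + Y) := hX.add hY
  have iX : IsProbabilityMeasure (P₀.map X) := Measure.isProbabilityMeasure_map hX.aemeasurable
  have iY : IsProbabilityMeasure (P₀.map Y) := Measure.isProbabilityMeasure_map hY.aemeasurable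
  have iXY : IsProbabilityMeasure (P₀.map (X + Y)) :=
    Measure.isProbabilityMeasure_map hXaddY.aemeasurable
  have iJ : IsProbabilityMeasure (P.map (fun ω => ((X₁ ω, X₂ ω, Y₁ ω), Y₂ ω))) :=
    Measure.isProbabilityMeasure_map hquad.aemeasurable
  have iPp : IsProbabilityMeasure (P₀.map (fun ω => (X ω, Y ω))) :=
    Measure.isProbabilityMeasure_map hXY.aemeasurable
  have iY₂ : IsProbabilityMeasure (P.map Y₂) := Measure.isProbabilityMeasure_map hY₂.aemeasurable
  set p : G → G → ℝ≥0∞ := fun x y => (P₀.map (fun ω => (X ω, Y ω))) {(x, y)} with hp_def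
  set q : G → ℝ≥0∞ := fun w => (P₀.map (X + Y)) {w} with hq_def
  set κ : (G × G × G) × G → ℝ≥0∞ :=
    fun t => (P.map (fun ω => ((X₁ ω, X₂ ω, Y₁ ω), Y₂ ω))) {t} with hκ_def
  have hp1 : ∀ x y, p x y ≤ 1 := fun x y => prob_le_one
  have hq1 : ∀ w, q w ≤ 1 := fun w => prob_le_one
  -- product formula
  have hprod : ∀ x y, p x y = (P₀.map X) {x} * (P₀.map Y) {y} := by
    intro x y
    have e1 : (fun ω => (X ω, Y ω)) ⁻¹' {(x, y)} = X ⁻¹' {x} ∩ Y ⁻¹' {y} := by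
      ext ω; simp [Prod.ext_iff]
    show (P₀.map (fun ω => (X ω, Y ω))) {(x, y)} = _
    rw [Measure.map_apply hXY (measurableSet_singleton _), e1,
      hindep.measure_inter_preimage_eq_mul _ _ (measurableSet_singleton _)
        (measurableSet_singleton _),
      ← Measure.map_apply hX (measurableSet_singleton _),
      ← Measure.map_apply hY (measurableSet_singleton _)]
  -- q is the fiber sum of p
  have hqsum : ∀ w, ∑' x, p x (w - x) = q w := by
    intro w
    have e1 : (X + Y) ⁻¹' {w} = ⋃ x, (fun ω => (X ω, Y ω)) ⁻¹' {(x, w - x)} := by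
      ext ω
      simp only [Set.mem_preimage, Set.mem_singleton_iff, Set.mem_iUnion, Prod.ext_iff,
        Pi.add_apply]
      constructor
      · intro h; exact ⟨X ω, rfl, by rw [← h]; abel⟩
      · rintro ⟨x, hx, hy⟩; rw [hx, hy]; abel
    have hdisj : Pairwise (Function.onFun Disjoint fun x => (fun ω => (X ω, Y ω)) ⁻¹' {(x, w - x)}) := by
      intro i j hij
      rw [Function.onFun, Set.disjoint_left]
      intro ω h1 h2
      simp only [Set.mem_preimage, Set.mem_singleton_iff, Prod.ext_iff] at h1 h2
      exact hij (h1.1 ▸ h2.1.symm ▸ rfl)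
    show _ = (P₀.map (X + Y)) {w}
    rw [Measure.map_apply hXaddY (measurableSet_singleton _), e1,
      measure_iUnion hdisj (fun x => hXY (measurableSet_singleton _))]
    refine tsum_congr fun x => ?_
    show (P₀.map (fun ω => (X ω, Y ω))) {(x, w - x)} = _
    exact Measure.map_apply hXY (measurableSet_singleton _)
  -- distribution facts
  have hmapW : P.map (fun ω => X₁ ω + Y₁ ω) = P₀.map (X + Y) :=
    (hid₁.comp (measurable_of_countable (fun z : G × G => z.1 + z.2))).map_eq
  have hmapY₂ : P.map Y₂ = P₀.map Y := (hid₂.comp measurable_snd).map_eq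
  -- the joint distribution of the quadruple
  have hκform : ∀ x₁ x₂ y₁ y₂, κ ((x₁, x₂, y₁), y₂)
      = if x₂ + y₂ = x₁ + y₁ then p x₁ y₁ * p x₂ y₂ / q (x₁ + y₁) else 0 := by
    intro x₁ x₂ y₁ y₂
    set A := (fun ω => (X₁ ω, Y₁ ω)) ⁻¹' {(x₁, y₁)} with hA_def
    set B := (fun ω => (X₂ ω, Y₂ ω)) ⁻¹' {(x₂, y₂)} with hB_def
    have hAmeas : MeasurableSet A := hpair1 (measurableSet_singleton _)
    have hBmeas : MeasurableSet B := hpair2 (measurableSet_singleton _)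
    have hκAB : κ ((x₁, x₂, y₁), y₂) = P (A ∩ B) := by
      show (P.map (fun ω => ((X₁ ω, X₂ ω, Y₁ ω), Y₂ ω))) {((x₁, x₂, y₁), y₂)} = _
      rw [Measure.map_apply hquad (measurableSet_singleton _)]
      congr 1
      ext ω
      simp only [Set.mem_preimage, Set.mem_singleton_iff, Prod.ext_iff, Set.mem_inter_iff,
        hA_def, hB_def]
      tauto
    have hPA : P A = p x₁ y₁ := by
      rw [hA_def, ← Measure.map_apply hpair1 (measurableSet_singleton _), hid₁.map_eq]
    have hPB : P B = p x₂ y₂ := by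
      rw [hB_def, ← Measure.map_apply hpair2 (measurableSet_singleton _), hid₂.map_eq]
    have hPW : P ((fun ω => X₁ ω + Y₁ ω) ⁻¹' {x₁ + y₁}) = q (x₁ + y₁) := by
      rw [← Measure.map_apply hW (measurableSet_singleton _), hmapW]
    by_cases hc : x₂ + y₂ = x₁ + y₁
    · rw [if_pos hc]
      have hAw : A ⊆ (fun ω => X₁ ω + Y₁ ω) ⁻¹' {x₁ + y₁} := by
        intro ω hω
        simp only [hA_def, Set.mem_preimage, Set.mem_singleton_iff, Prod.ext_iff] at hω ⊢
        rw [hω.1, hω.2]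
      have hBw : B ⊆ (fun ω => X₁ ω + Y₁ ω) ⁻¹' {x₁ + y₁} := by
        intro ω hω
        simp only [hB_def, Set.mem_preimage, Set.mem_singleton_iff, Prod.ext_iff] at hω ⊢
        rw [← hsum ω, hω.1, hω.2, hc]
      have hcexp := (condIndepFun_iff_condExp_inter_preimage_eq_mul hpair1 hpair2).1 hci
        {(x₁, y₁)} {(x₂, y₂)} (measurableSet_singleton _) (measurableSet_singleton _)
      have hkey := cond_prod_meas P hW hAmeas hBmeas hcexp hAw hBw
      rw [hPA, hPB, hPW] at hkey
      by_cases h0 : q (x₁ + y₁) = 0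
      · have hA0 : P A = 0 := by
          have h' := measure_mono (μ := P) hAw
          rw [hPW, h0] at h'
          exact le_antisymm h' (zero_le)
        have hp10 : p x₁ y₁ = 0 := hPA.symm.trans hA0
        have hAB0 : P (A ∩ B) = 0 := by
          have h2 := measure_mono (μ := P) (Set.inter_subset_left (s := A) (t := B))
          rw [hA0] at h2
          exact le_antisymm h2 (zero_le)
        rw [hκAB, hAB0, hp10, h0]
        simp
      · rw [hκAB]
        refine (ENNReal.eq_div_iff h0 (ne_of_lt (lt_of_le_of_lt (hq1 _)
          ENNReal.one_lt_top))).2 ?_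
        rw [mul_comm]
        exact hkey
    · rw [if_neg hc, hκAB]
      have hAB : A ∩ B = ∅ := by
        rw [Set.eq_empty_iff_forall_notMem]
        rintro ω ⟨hωA, hωB⟩
        simp only [hA_def, hB_def, Set.mem_preimage, Set.mem_singleton_iff,
          Prod.ext_iff] at hωA hωB
        exact hc (by rw [← hωB.1, ← hωB.2, ← hωA.1, ← hωA.2, hsum ω])
      rw [hAB]
      simp
  -- apply the master computation
  have hmaster := master_sum p q κ hqsum hp1 hq1 hκform
  have hofJ : ENNReal.ofReal (sent P (fun ω => ((X₁ ω, X₂ ω, Y₁ ω), Y₂ ω)))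
      = ∑' t, phiE (κ t) := ofReal_sent hfJ
  have hofW : ENNReal.ofReal (sent P₀ (X + Y)) = ∑' w, phiE (q w) := ofReal_sent hfXY
  have hprodsum : ∑' z : G × G, phiE (p z.1 z.2)
      = ENNReal.ofReal (sent P₀ X) + ENNReal.ofReal (sent P₀ Y) := by
    have hps := prod_entropy_sum (fun x => (P₀.map X) {x}) (fun y => (P₀.map Y) {y})
      (fun _ => prob_le_one) (fun _ => prob_le_one)
      (tsum_singleton_meas _) (tsum_singleton_meas _)
    rw [ofReal_sent hfX, ofReal_sent hfY, ← hps]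
    exact tsum_congr fun z => by rw [hprod z.1 z.2]
  rw [← hofJ, ← hofW, hprodsum] at hmaster
  -- pass to real numbers
  have hJ0 : 0 ≤ sent P (fun ω => ((X₁ ω, X₂ ω, Y₁ ω), Y₂ ω)) := sent_nonneg'
  have hW0 : 0 ≤ sent P₀ (X + Y) := sent_nonneg'
  have hX0 : 0 ≤ sent P₀ X := sent_nonneg'
  have hY0 : 0 ≤ sent P₀ Y := sent_nonneg'
  have hreal := congrArg ENNReal.toReal hmaster
  rw [ENNReal.toReal_add ENNReal.ofReal_ne_top ENNReal.ofReal_ne_top,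
    ENNReal.toReal_add (ENNReal.add_ne_top.2 ⟨ENNReal.ofReal_ne_top, ENNReal.ofReal_ne_top⟩)
      (ENNReal.add_ne_top.2 ⟨ENNReal.ofReal_ne_top, ENNReal.ofReal_ne_top⟩),
    ENNReal.toReal_add ENNReal.ofReal_ne_top ENNReal.ofReal_ne_top,
    ENNReal.toReal_ofReal hJ0, ENNReal.toReal_ofReal hW0, ENNReal.toReal_ofReal hX0,
    ENNReal.toReal_ofReal hY0] at hreal
  -- finish
  have hY2sent : sent P Y₂ = sent P₀ Y := by rw [sent, sent, hmapY₂]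
  show sent P (fun ω => ((X₁ ω, X₂ ω, Y₁ ω), Y₂ ω)) - sent P Y₂ = _
  rw [hY2sent]
  linarith [hreal]
end
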